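/- arXiv:2309.07399 — 6 statements merged into one kernel-verified Lean document; each statement's English description precedes it below -/
import Mathlib

section
/- Let g ∈ U(N) and let X, Y be N×N complex matrices. Let {B_k} be an orthonormal basis of the (real) tangent space T_g U(N) with respect to the real inner product ⟨A,B⟩ = (1/2) Re Tr(A† B). Then the sum over k of ⟨B_k, X B_k Y⟩ equals Re(Tr(X) Tr(Y)). -/
open Matrix

namespace Stmt4Aux

variable {N : ℕ}

noncomputable def ip (A B : Matrix (Fin N) (Fin N) ℂ) : ℝ :=
  (1/2 : ℝ) * (Matrix.trace (Aᴴ * B)).re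

lemma ip_comm (A B : Matrix (Fin N) (Fin N) ℂ) : ip A B = ip B A := by
  unfold ip
  congr 1
  have : Matrix.trace (Bᴴ * A) = star (Matrix.trace (Aᴴ * B)) := by
    rw [← Matrix.trace_conjTranspose, conjTranspose_mul, conjTranspose_conjTranspose]
  rw [this]
  simp [Complex.star_def]

lemma ip_add_right (A B C : Matrix (Fin N) (Fin N) ℂ) :
    ip A (B + C) = ip A B + ip A C := by
  unfold ip
  rw [mul_add, trace_add]
  simp [mul_add]

lemma ip_smul_right (r : ℝ) (A B : Matrix (Fin N) (Fin N) ℂ) :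
    ip A (r • B) = r * ip A B := by
  unfold ip
  rw [Matrix.mul_smul, trace_smul]
  simp [Complex.real_smul]
  ring

lemma ip_adj (X Y A M : Matrix (Fin N) (Fin N) ℂ) :
    ip A (X * M * Y) = ip (Xᴴ * A * Yᴴ) M := by
  unfold ip
  congr 2
  simp only [conjTranspose_mul, conjTranspose_conjTranspose]
  rw [Matrix.mul_assoc Y, Matrix.trace_mul_comm Y]
  simp [Matrix.mul_assoc]

lemma ip_I_smul (A B : Matrix (Fin N) (Fin N) ℂ) :
    ip (Complex.I • A) (Complex.I • B) = ip A B := by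
  unfold ip
  rw [conjTranspose_smul, Matrix.smul_mul, Matrix.mul_smul, smul_smul, trace_smul]
  simp [Complex.star_def, Complex.conj_I]

end Stmt4Aux

namespace Stmt4Aux

lemma trace_single_mul (p q : Fin N) (Z : Matrix (Fin N) (Fin N) ℂ) :
    Matrix.trace (Matrix.single p q (1:ℂ) * Z) = Z q p := by
  simp [Matrix.trace, Matrix.diag, Matrix.mul_apply, Matrix.single, ite_and,
    Finset.sum_ite_eq, Matrix.of_apply]

lemma single_conjTranspose (p q : Fin N) :
    (Matrix.single p q (1:ℂ))ᴴ = Matrix.single q p (1:ℂ) := by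
  ext i j
  simp [conjTranspose_apply, Matrix.single, Matrix.of_apply, and_comm]

lemma ip_single (p q : Fin N) (Z : Matrix (Fin N) (Fin N) ℂ) :
    ip (Matrix.single p q (1:ℂ)) Z = (1/2 : ℝ) * (Z p q).re := by
  unfold ip
  rw [single_conjTranspose, trace_single_mul]

lemma ip_I_single (p q : Fin N) (Z : Matrix (Fin N) (Fin N) ℂ) :
    ip (Complex.I • Matrix.single p q (1:ℂ)) Z = (1/2 : ℝ) * (Z p q).im := by
  unfold ip
  rw [conjTranspose_smul, single_conjTranspose, Matrix.smul_mul, trace_smul]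
  simp [Complex.star_def, Complex.conj_I, trace_single_mul]

end Stmt4Aux

namespace Stmt4Aux

lemma parseval (Z W : Matrix (Fin N) (Fin N) ℂ) :
    ip Z W = 2 * ∑ p : Fin N, ∑ q : Fin N,
      (ip (Matrix.single p q (1:ℂ)) Z * ip (Matrix.single p q (1:ℂ)) W
        + ip (Complex.I • Matrix.single p q (1:ℂ)) Z
          * ip (Complex.I • Matrix.single p q (1:ℂ)) W) := by
  simp only [ip_single, ip_I_single]
  unfold ip
  have h : (Matrix.trace (Zᴴ * W)).re
      = ∑ i : Fin N, ∑ j : Fin N,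
        ((Z j i).re * (W j i).re + (Z j i).im * (W j i).im) := by
    rw [Matrix.trace]
    simp only [Matrix.diag_apply, Matrix.mul_apply, conjTranspose_apply, Complex.re_sum]
    refine Finset.sum_congr rfl fun i _ => ?_
    refine Finset.sum_congr rfl fun j _ => ?_
    simp [Complex.mul_re]
  rw [h, Finset.sum_comm]
  simp only [Finset.mul_sum]
  exact Finset.sum_congr rfl fun p _ => Finset.sum_congr rfl fun q _ => by ring

end Stmt4Aux

namespace Stmt4Aux

noncomputable def Pm (g M : Matrix (Fin N) (Fin N) ℂ) : Matrix (Fin N) (Fin N) ℂ :=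
  (1/2 : ℝ) • (M - g * Mᴴ * g)

lemma Pm_fix {g M : Matrix (Fin N) (Fin N) ℂ} (hgg : g * gᴴ = 1)
    (hT : gᴴ * M + Mᴴ * g = 0) : Pm g M = M := by
  have h1 : gᴴ * M = -(Mᴴ * g) := eq_neg_of_add_eq_zero_left hT
  have h2 : g * (gᴴ * M) = M := by rw [← Matrix.mul_assoc, hgg, Matrix.one_mul]
  have h3 : g * Mᴴ * g = -M := by
    rw [h1, Matrix.mul_neg] at h2
    rw [← Matrix.mul_assoc] at h2
    linear_combination (norm := module) -h2
  unfold Pm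
  rw [h3, sub_neg_eq_add]
  module

lemma Pm_tang {g : Matrix (Fin N) (Fin N) ℂ} (hg : gᴴ * g = 1)
    (M : Matrix (Fin N) (Fin N) ℂ) : gᴴ * Pm g M + (Pm g M)ᴴ * g = 0 := by
  unfold Pm
  rw [conjTranspose_smul, star_trivial]
  rw [Matrix.mul_smul, Matrix.smul_mul, ← smul_add]
  have h1 : gᴴ * (g * Mᴴ * g) = Mᴴ * g := by
    rw [← Matrix.mul_assoc, ← Matrix.mul_assoc, hg, Matrix.one_mul]
  have h2 : (M - g * Mᴴ * g)ᴴ * g = Mᴴ * g - gᴴ * M := by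
    simp only [conjTranspose_sub, conjTranspose_mul, conjTranspose_conjTranspose]
    rw [Matrix.sub_mul]
    congr 1
    rw [Matrix.mul_assoc, Matrix.mul_assoc, hg, Matrix.mul_one]
  rw [Matrix.mul_sub, h1, h2]
  rw [show gᴴ * M - Mᴴ * g + (Mᴴ * g - gᴴ * M) = 0 by abel]
  simp

lemma Pm_selfadj (g A M : Matrix (Fin N) (Fin N) ℂ) :
    ip (Pm g A) M = ip A (Pm g M) := by
  have key : (Matrix.trace (gᴴ * A * gᴴ * M)).re
      = (Matrix.trace (Aᴴ * (g * Mᴴ * g))).re := by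
    have hmat : (gᴴ * M * gᴴ * A)ᴴ = Aᴴ * (g * Mᴴ * g) := by
      simp [conjTranspose_mul, Matrix.mul_assoc]
    have h1 : Matrix.trace (Aᴴ * (g * Mᴴ * g)) = star (Matrix.trace (gᴴ * M * gᴴ * A)) := by
      rw [← Matrix.trace_conjTranspose, hmat]
    have h2 : Matrix.trace (gᴴ * M * gᴴ * A) = Matrix.trace (gᴴ * A * gᴴ * M) := by
      rw [show gᴴ * M * gᴴ * A = (gᴴ * M) * (gᴴ * A) from by rw [Matrix.mul_assoc],
        show gᴴ * A * gᴴ * M = (gᴴ * A) * (gᴴ * M) from by rw [Matrix.mul_assoc],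
        Matrix.trace_mul_comm]
    rw [h1, h2]
    simp [Complex.star_def]
  unfold ip Pm
  rw [conjTranspose_smul, star_trivial, Matrix.smul_mul, Matrix.mul_smul,
    trace_smul, trace_smul]
  rw [conjTranspose_sub, conjTranspose_mul, conjTranspose_mul, conjTranspose_conjTranspose]
  rw [Matrix.sub_mul, Matrix.mul_sub, trace_sub, trace_sub]
  simp only [Complex.real_smul, Complex.sub_re, Complex.re_ofReal_mul]
  rw [show gᴴ * (A * gᴴ) * M = gᴴ * A * gᴴ * M from by rw [Matrix.mul_assoc gᴴ A], key]

end Stmt4Aux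

namespace Stmt4Aux

lemma ip_zero_left (B : Matrix (Fin N) (Fin N) ℂ) : ip 0 B = 0 := by
  unfold ip; simp

lemma ip_zero_right (A : Matrix (Fin N) (Fin N) ℂ) : ip A 0 = 0 := by
  unfold ip; simp

lemma ip_add_left (A B C : Matrix (Fin N) (Fin N) ℂ) :
    ip (A + B) C = ip A C + ip B C := by
  rw [ip_comm, ip_add_right, ip_comm C A, ip_comm C B]

lemma ip_smul_left (r : ℝ) (A B : Matrix (Fin N) (Fin N) ℂ) :
    ip (r • A) B = r * ip A B := by
  rw [ip_comm, ip_smul_right, ip_comm B A]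

end Stmt4Aux

open Stmt4Aux

/-- For g ∈ U(N) and any orthonormal basis {B_k} of the real tangent space T_g U(N)
w.r.t. ⟨A,B⟩ = (1/2) Re Tr(Aᴴ B), we have ∑_k ⟨B_k, X B_k Y⟩ = Re(Tr X · Tr Y). -/
theorem stmt_4 {N : ℕ} (g : Matrix (Fin N) (Fin N) ℂ)
    (hg : gᴴ * g = 1)
    {ι : Type*} [Fintype ι] [DecidableEq ι] (B : ι → Matrix (Fin N) (Fin N) ℂ)
    (htang : ∀ k, gᴴ * B k + (B k)ᴴ * g = 0)
    (horth : ∀ k l, (1/2 : ℝ) * (Matrix.trace ((B k)ᴴ * B l)).re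
      = if k = l then 1 else 0)
    (hspan : ∀ M : Matrix (Fin N) (Fin N) ℂ, gᴴ * M + Mᴴ * g = 0 →
      M ∈ Submodule.span ℝ (Set.range B))
    (X Y : Matrix (Fin N) (Fin N) ℂ) :
    ∑ k, (1/2 : ℝ) * (Matrix.trace ((B k)ᴴ * (X * B k * Y))).re
      = (Matrix.trace X * Matrix.trace Y).re := by
  classical
  have hgg : g * gᴴ = 1 := mul_eq_one_comm.mp hg
  have horth' : ∀ k l, ip (B k) (B l) = if k = l then 1 else 0 := horth
  have span_exp : ∀ (Z : Matrix (Fin N) (Fin N) ℂ),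
      ∀ M ∈ Submodule.span ℝ (Set.range B),
      ip M Z = ∑ k, ip (B k) M * ip (B k) Z := by
    intro Z M hM
    induction hM using Submodule.span_induction with
    | mem x hx =>
        obtain ⟨j, rfl⟩ := hx
        have h : ∀ k, ip (B k) (B j) * ip (B k) Z
            = if k = j then ip (B k) Z else 0 := by
          intro k; rw [horth']; split <;> simp
        rw [Finset.sum_congr rfl fun k _ => h k]
        simp
    | zero => simp [ip_zero_left, ip_zero_right]
    | add x y hx hy ihx ihy =>
        rw [ip_add_left, ihx, ihy, ← Finset.sum_add_distrib]
        exact Finset.sum_congr rfl fun k _ => by rw [ip_add_right]; ring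
    | smul r x hx ih =>
        rw [ip_smul_left, ih, Finset.mul_sum]
        exact Finset.sum_congr rfl fun k _ => by rw [ip_smul_right]; ring
  have fix : ∀ k, Pm g (B k) = B k := fun k => Pm_fix hgg (htang k)
  have sa : ∀ A M : Matrix (Fin N) (Fin N) ℂ, ip (Pm g A) M = ip A (Pm g M) :=
    Pm_selfadj g
  have key : ∀ Z W : Matrix (Fin N) (Fin N) ℂ,
      (∑ k, ip Z (B k) * ip W (B k)) = ip (Pm g Z) W := by
    intro Z W
    have hV : ∀ (V : Matrix (Fin N) (Fin N) ℂ) k, ip V (B k) = ip (B k) (Pm g V) := by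
      intro V k
      calc ip V (B k) = ip (B k) V := ip_comm _ _
        _ = ip (Pm g (B k)) V := by rw [fix]
        _ = ip (B k) (Pm g V) := sa _ _
    calc ∑ k, ip Z (B k) * ip W (B k)
        = ∑ k, ip (B k) (Pm g Z) * ip (B k) (Pm g W) :=
          Finset.sum_congr rfl fun k _ => by rw [hV Z k, hV W k]
      _ = ip (Pm g Z) (Pm g W) :=
          (span_exp (Pm g W) (Pm g Z) (hspan _ (Pm_tang hg Z))).symm
      _ = ip (Pm g (Pm g Z)) W := (sa _ _).symm
      _ = ip (Pm g Z) W := by rw [Pm_fix hgg (Pm_tang hg Z)]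
  have step1 : ∀ k, ip (B k) (X * B k * Y)
      = 2 * ∑ p : Fin N, ∑ q : Fin N,
        (ip (Matrix.single p q (1:ℂ)) (B k)
            * ip (Xᴴ * Matrix.single p q (1:ℂ) * Yᴴ) (B k)
          + ip (Complex.I • Matrix.single p q (1:ℂ)) (B k)
            * ip (Xᴴ * (Complex.I • Matrix.single p q (1:ℂ)) * Yᴴ) (B k)) := by
    intro k
    rw [parseval (B k) (X * B k * Y)]
    congr 1
    refine Finset.sum_congr rfl fun p _ => Finset.sum_congr rfl fun q _ => ?_
    rw [ip_adj X Y (Matrix.single p q (1:ℂ)) (B k),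
      ip_adj X Y (Complex.I • Matrix.single p q (1:ℂ)) (B k)]
  have step2 : ∑ k, ip (B k) (X * B k * Y)
      = 2 * ∑ p : Fin N, ∑ q : Fin N,
        (ip (Pm g (Matrix.single p q (1:ℂ))) (Xᴴ * Matrix.single p q (1:ℂ) * Yᴴ)
          + ip (Pm g (Complex.I • Matrix.single p q (1:ℂ)))
              (Xᴴ * (Complex.I • Matrix.single p q (1:ℂ)) * Yᴴ)) := by
    rw [Finset.sum_congr rfl fun k _ => step1 k, ← Finset.mul_sum]
    congr 1
    rw [Finset.sum_comm]
    refine Finset.sum_congr rfl fun p _ => ?_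
    rw [Finset.sum_comm]
    refine Finset.sum_congr rfl fun q _ => ?_
    rw [Finset.sum_add_distrib, key, key]
  have final : ∀ p q : Fin N,
      ip (Pm g (Matrix.single p q (1:ℂ))) (Xᴴ * Matrix.single p q (1:ℂ) * Yᴴ)
        + ip (Pm g (Complex.I • Matrix.single p q (1:ℂ)))
            (Xᴴ * (Complex.I • Matrix.single p q (1:ℂ)) * Yᴴ)
      = (1/2 : ℝ) * (X p p * Y q q).re := by
    intro p q
    set Ee := Matrix.single p q (1:ℂ) with hEe
    set Q : Matrix (Fin N) (Fin N) ℂ := (1/2 : ℝ) • (Ee + g * Eeᴴ * g) with hQ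
    have t1 : ip (Pm g Ee) (Xᴴ * Ee * Yᴴ) = ip Ee (X * Pm g Ee * Y) := by
      rw [ip_comm, ← ip_adj]
    have t2 : ip (Pm g (Complex.I • Ee)) (Xᴴ * (Complex.I • Ee) * Yᴴ)
        = ip (Complex.I • Ee) (X * Pm g (Complex.I • Ee) * Y) := by
      rw [ip_comm, ← ip_adj]
    have hPmI : Pm g (Complex.I • Ee) = Complex.I • Q := by
      unfold Pm
      rw [conjTranspose_smul]
      rw [show star Complex.I = -Complex.I from by simp]
      rw [Matrix.mul_smul, Matrix.smul_mul, neg_smul, hQ]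
      module
    have t2' : ip (Complex.I • Ee) (X * (Complex.I • Q) * Y) = ip Ee (X * Q * Y) := by
      rw [show X * (Complex.I • Q) * Y = Complex.I • (X * Q * Y) from by
        rw [Matrix.mul_smul, Matrix.smul_mul], ip_I_smul]
    have hsum : X * Pm g Ee * Y + X * Q * Y = X * Ee * Y := by
      have h : Pm g Ee + Q = Ee := by unfold Pm; rw [hQ]; module
      calc X * Pm g Ee * Y + X * Q * Y = X * (Pm g Ee + Q) * Y := by
            rw [Matrix.mul_add, Matrix.add_mul]
        _ = X * Ee * Y := by rw [h]
    have hentry : (X * Ee * Y) p q = X p p * Y q q := by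
      rw [hEe]
      simp [Matrix.mul_apply, Matrix.single, ite_and, Finset.sum_ite_eq]
    rw [t1, t2, hPmI, t2', ← ip_add_right, hsum, ip_single, hentry]
  rw [show (∑ k, (1/2 : ℝ) * (Matrix.trace ((B k)ᴴ * (X * B k * Y))).re)
      = ∑ k, ip (B k) (X * B k * Y) from rfl]
  rw [step2, Finset.sum_congr rfl fun p _ => Finset.sum_congr rfl fun q _ => final p q]
  have htr : (Matrix.trace X * Matrix.trace Y).re
      = ∑ p : Fin N, ∑ q : Fin N, (X p p * Y q q).re := by
    rw [Matrix.trace, Matrix.trace, Finset.sum_mul_sum, Complex.re_sum]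
    exact Finset.sum_congr rfl fun p _ => by rw [Complex.re_sum]; rfl
  rw [htr, Finset.mul_sum]
  refine Finset.sum_congr rfl fun p _ => ?_
  rw [Finset.mul_sum]
  exact Finset.sum_congr rfl fun q _ => by ring
end

section
/- Let g ∈ SU(N) and let X, Y be N×N complex matrices. Let {B_k} be an orthonormal basis of T_g SU(N) with respect to ⟨A,B⟩ = (1/2) Re Tr(A† B). Then the sum over k of ⟨B_k, X B_k Y⟩ equals Re(Tr(X) Tr(Y)) - (1/N) Re Tr(g^{-1} X g Y). -/
open Matrix Complex

namespace SU5Aux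

variable {N : ℕ}

noncomputable def ip (A M : Matrix (Fin N) (Fin N) ℂ) : ℝ :=
  (1/2 : ℝ) * (Matrix.trace (Aᴴ * M)).re

lemma trace_form (A M : Matrix (Fin N) (Fin N) ℂ) :
    Matrix.trace (Aᴴ * M) = ∑ p, ∑ q, (starRingEnd ℂ) (A p q) * M p q := by
  rw [Matrix.trace]
  simp only [Matrix.diag_apply, Matrix.mul_apply, Matrix.conjTranspose_apply]
  rw [Finset.sum_comm]
  rfl

lemma ip_add_right (A M₁ M₂ : Matrix (Fin N) (Fin N) ℂ) :
    ip A (M₁ + M₂) = ip A M₁ + ip A M₂ := by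
  simp [ip, Matrix.mul_add, mul_add]

lemma ip_sub_right (A M₁ M₂ : Matrix (Fin N) (Fin N) ℂ) :
    ip A (M₁ - M₂) = ip A M₁ - ip A M₂ := by
  simp [ip, Matrix.mul_sub, mul_sub]

lemma ip_smul_right (r : ℝ) (A M : Matrix (Fin N) (Fin N) ℂ) :
    ip A (r • M) = r * ip A M := by
  simp [ip, Matrix.mul_smul]; ring

lemma ip_E (A : Matrix (Fin N) (Fin N) ℂ) (p q : Fin N) :
    ip A (Matrix.single p q 1) = (1/2 : ℝ) * (A p q).re := by
  rw [ip, trace_form]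
  simp only [Matrix.single, Matrix.of_apply, mul_ite, mul_one, mul_zero,
    ← Complex.re_sum]
  rw [Finset.sum_comm]
  simp [ite_and, Finset.sum_ite_eq, apply_ite Complex.re]

lemma ip_iE (A : Matrix (Fin N) (Fin N) ℂ) (p q : Fin N) :
    ip A (Complex.I • Matrix.single p q 1) = (1/2 : ℝ) * (A p q).im := by
  rw [ip, trace_form]
  simp only [Matrix.smul_apply, Matrix.single, Matrix.of_apply, smul_ite, smul_zero,
    mul_ite, mul_zero, ← Complex.re_sum]
  rw [Finset.sum_comm]
  simp [ite_and, Finset.sum_ite_eq, apply_ite Complex.re]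

lemma reproduce {ι : Type*} [Fintype ι] [DecidableEq ι]
    (B : ι → Matrix (Fin N) (Fin N) ℂ)
    (horth : ∀ k l, ip (B k) (B l) = if k = l then 1 else 0) :
    ∀ w ∈ Submodule.span ℝ (Set.range B), (∑ k, ip (B k) w • B k) = w := by
  intro w hw
  induction hw using Submodule.span_induction with
  | mem x hx =>
    obtain ⟨l, rfl⟩ := hx
    have h : ∀ k, ip (B k) (B l) • B k = if k = l then B l else 0 := by
      intro k
      rw [horth]
      split <;> simp_all
    simp [h]
  | zero => simp [ip]
  | add x y hx hy ihx ihy =>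
    simp only [ip_add_right, add_smul, Finset.sum_add_distrib, ihx, ihy]
  | smul a x hx ih =>
    simp only [ip_smul_right, mul_smul, ← Finset.smul_sum, ih]

lemma ip_flip_tangent (g A : Matrix (Fin N) (Fin N) ℂ)
    (hgg : g * gᴴ = 1) (h1 : gᴴ * A + Aᴴ * g = 0) (w : Matrix (Fin N) (Fin N) ℂ) :
    ip A (g * wᴴ * g) = - ip A w := by
  have hB1 : Aᴴ * g = -(gᴴ * A) := by linear_combination (norm := noncomm_ring) h1
  have htr : Matrix.trace (Aᴴ * (g * wᴴ * g)) = - star (Matrix.trace (Aᴴ * w)) := by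
    calc Matrix.trace (Aᴴ * (g * wᴴ * g)) = Matrix.trace ((Aᴴ * g) * (wᴴ * g)) := by
          congr 1; noncomm_ring
      _ = Matrix.trace (-(gᴴ * (A * wᴴ) * g)) := by rw [hB1]; congr 1; noncomm_ring
      _ = - Matrix.trace (g * (gᴴ * (A * wᴴ))) := by
          rw [Matrix.trace_neg, Matrix.trace_mul_comm]
      _ = - Matrix.trace (A * wᴴ) := by
          rw [show g * (gᴴ * (A * wᴴ)) = (g * gᴴ) * (A * wᴴ) by noncomm_ring, hgg, one_mul]
      _ = - star (Matrix.trace (Aᴴ * w)) := by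
          rw [Matrix.trace_mul_comm, show wᴴ * A = (Aᴴ * w)ᴴ by simp, Matrix.trace_conjTranspose]
  simp [ip, htr]

lemma ip_v_zero (g A : Matrix (Fin N) (Fin N) ℂ) (c : ℂ)
    (h1 : gᴴ * A + Aᴴ * g = 0) (h2 : Matrix.trace (gᴴ * A) = 0) :
    ip A (c • g) = 0 := by
  have hB1 : Aᴴ * g = -(gᴴ * A) := by linear_combination (norm := noncomm_ring) h1
  rw [ip, Matrix.mul_smul, Matrix.trace_smul, hB1]
  simp [h2]

lemma qtang1 (g : Matrix (Fin N) (Fin N) ℂ) (hg : gᴴ * g = 1)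
    (w : Matrix (Fin N) (Fin N) ℂ) :
    gᴴ * ((1/2 : ℝ) • (w - g * wᴴ * g)
        - ip (((Real.sqrt (2/(N:ℝ)) : ℂ) * Complex.I) • g) w
          • (((Real.sqrt (2/(N:ℝ)) : ℂ) * Complex.I) • g))
      + ((1/2 : ℝ) • (w - g * wᴴ * g)
        - ip (((Real.sqrt (2/(N:ℝ)) : ℂ) * Complex.I) • g) w
          • (((Real.sqrt (2/(N:ℝ)) : ℂ) * Complex.I) • g))ᴴ * g = 0 := by
  set s : ℝ := Real.sqrt (2/(N:ℝ)) with hs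
  set c : ℂ := (s : ℂ) * Complex.I with hc
  set r : ℝ := ip (c • g) w with hr
  have hcstar : star c = -c := by simp [hc]
  have h1 : gᴴ * ((1/2 : ℝ) • (w - g * wᴴ * g)) + ((1/2 : ℝ) • (w - g * wᴴ * g))ᴴ * g = 0 := by
    rw [Matrix.conjTranspose_smul, Matrix.conjTranspose_sub]
    simp only [star_trivial, Matrix.conjTranspose_mul, Matrix.conjTranspose_conjTranspose]
    rw [Matrix.mul_smul, Matrix.smul_mul]
    rw [Matrix.mul_sub, Matrix.sub_mul]
    rw [show gᴴ * (g * wᴴ * g) = (gᴴ * g) * (wᴴ * g) by noncomm_ring, hg, one_mul]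
    rw [show gᴴ * (w * gᴴ) * g = gᴴ * w * (gᴴ * g) by noncomm_ring, hg, mul_one]
    rw [← smul_add]
    rw [show gᴴ * w - wᴴ * g + (wᴴ * g - gᴴ * w) = 0 by abel]
    simp
  have h2 : gᴴ * (r • c • g) + (r • c • g)ᴴ * g = 0 := by
    simp only [Matrix.conjTranspose_smul, star_trivial, hcstar, Matrix.mul_smul,
      Matrix.smul_mul, hg, neg_smul]
    simp [Matrix.smul_mul, hg]
  calc gᴴ * ((1/2 : ℝ) • (w - g * wᴴ * g) - r • c • g)
        + ((1/2 : ℝ) • (w - g * wᴴ * g) - r • c • g)ᴴ * g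
      = (gᴴ * ((1/2 : ℝ) • (w - g * wᴴ * g)) + ((1/2 : ℝ) • (w - g * wᴴ * g))ᴴ * g)
        - (gᴴ * (r • c • g) + (r • c • g)ᴴ * g) := by
        rw [Matrix.conjTranspose_sub, Matrix.mul_sub, Matrix.sub_mul]; abel
    _ = 0 := by rw [h1, h2]; simp

lemma qtang2 (hN : 0 < N) (g : Matrix (Fin N) (Fin N) ℂ) (hg : gᴴ * g = 1)
    (w : Matrix (Fin N) (Fin N) ℂ) :
    Matrix.trace (gᴴ * ((1/2 : ℝ) • (w - g * wᴴ * g)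
        - ip (((Real.sqrt (2/(N:ℝ)) : ℂ) * Complex.I) • g) w
          • (((Real.sqrt (2/(N:ℝ)) : ℂ) * Complex.I) • g))) = 0 := by
  set s : ℝ := Real.sqrt (2/(N:ℝ)) with hs
  set c : ℂ := (s : ℂ) * Complex.I with hc
  set z : ℂ := Matrix.trace (gᴴ * w) with hz
  have hsN : s^2 * N = 2 := by
    rw [hs, Real.sq_sqrt (by positivity)]
    field_simp
  have hrval : ip (c • g) w = (1/2 : ℝ) * (-c * z).re := by
    rw [ip, Matrix.conjTranspose_smul, Matrix.smul_mul, Matrix.trace_smul]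
    simp [hc]
    exact Or.inl rfl
  have h1 : Matrix.trace (gᴴ * (g * wᴴ * g)) = star z := by
    rw [show gᴴ * (g * wᴴ * g) = (gᴴ * g) * (wᴴ * g) by noncomm_ring, hg, one_mul]
    rw [show wᴴ * g = (gᴴ * w)ᴴ by simp, Matrix.trace_conjTranspose]
  have h2 : Matrix.trace (gᴴ * (c • g)) = c * N := by
    rw [Matrix.mul_smul, Matrix.trace_smul, hg, Matrix.trace_one]
    simp [smul_eq_mul]
  rw [Matrix.mul_sub, Matrix.trace_sub, Matrix.mul_smul, Matrix.trace_smul,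
    Matrix.mul_sub, Matrix.trace_sub, Matrix.mul_smul, Matrix.trace_smul, h1, h2, hrval]
  rw [← hz]
  simp only [hc, smul_eq_mul, Complex.real_smul]
  simp [Complex.ext_iff, Complex.mul_re, Complex.mul_im, Complex.star_def]
  linear_combination (-(z.im)/2) * hsN

lemma completeness (hN : 0 < N) (g : Matrix (Fin N) (Fin N) ℂ) (hg : gᴴ * g = 1)
    (hgg : g * gᴴ = 1)
    {ι : Type*} [Fintype ι] [DecidableEq ι] (B : ι → Matrix (Fin N) (Fin N) ℂ)
    (htang : ∀ k, gᴴ * B k + (B k)ᴴ * g = 0 ∧ Matrix.trace (gᴴ * B k) = 0)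
    (horth : ∀ k l, ip (B k) (B l) = if k = l then 1 else 0)
    (hspan : ∀ M : Matrix (Fin N) (Fin N) ℂ,
      gᴴ * M + Mᴴ * g = 0 → Matrix.trace (gᴴ * M) = 0 →
      M ∈ Submodule.span ℝ (Set.range B))
    (w : Matrix (Fin N) (Fin N) ℂ) :
    (∑ k, ip (B k) w • B k)
      = (1/2 : ℝ) • (w - g * wᴴ * g)
        - ip (((Real.sqrt (2/(N:ℝ)) : ℂ) * Complex.I) • g) w
          • (((Real.sqrt (2/(N:ℝ)) : ℂ) * Complex.I) • g) := by
  set c : ℂ := ((Real.sqrt (2/(N:ℝ)) : ℂ) * Complex.I) with hc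
  set Qw : Matrix (Fin N) (Fin N) ℂ :=
    (1/2 : ℝ) • (w - g * wᴴ * g) - ip (c • g) w • (c • g) with hQ
  have hmem : Qw ∈ Submodule.span ℝ (Set.range B) :=
    hspan Qw (qtang1 g hg w) (qtang2 hN g hg w)
  have hrep := reproduce B horth Qw hmem
  have hips : ∀ k, ip (B k) Qw = ip (B k) w := by
    intro k
    obtain ⟨ht1, ht2⟩ := htang k
    rw [hQ, ip_sub_right, ip_smul_right, ip_smul_right, ip_sub_right,
      ip_flip_tangent g (B k) hgg ht1 w, ip_v_zero g (B k) c ht1 ht2]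
    ring
  rw [← hrep]
  exact Finset.sum_congr rfl fun k _ => by rw [hips]

lemma std_apply (p q r s : Fin N) :
    Matrix.single p q (1:ℂ) r s = if p = r ∧ q = s then 1 else 0 := rfl

lemma conj_formula (w : ℂ) : (starRingEnd ℂ) w = (w.re : ℂ) - (w.im : ℂ) * Complex.I := by
  simp [Complex.ext_iff]

lemma std_conjT (p q : Fin N) :
    (Matrix.single p q (1:ℂ))ᴴ = Matrix.single q p 1 := by
  ext a b
  simp [Matrix.conjTranspose_apply, Matrix.single, and_comm, apply_ite (starRingEnd ℂ)]

lemma g_std_g (g : Matrix (Fin N) (Fin N) ℂ) (p q r s : Fin N) :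
    (g * Matrix.single q p (1:ℂ) * g) r s = g r q * g p s := by
  simp [Matrix.mul_apply, Matrix.single, ite_and, Finset.sum_ite_eq,
    Finset.mul_sum, Finset.sum_ite_eq']

lemma tensor (g : Matrix (Fin N) (Fin N) ℂ)
    {ι : Type*} [Fintype ι] (B : ι → Matrix (Fin N) (Fin N) ℂ)
    (hcomp : ∀ w, (∑ k, ip (B k) w • B k)
      = (1/2 : ℝ) • (w - g * wᴴ * g)
        - ip (((Real.sqrt (2/(N:ℝ)) : ℂ) * Complex.I) • g) w
          • (((Real.sqrt (2/(N:ℝ)) : ℂ) * Complex.I) • g))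
    (p q r s : Fin N) :
    (∑ k, (starRingEnd ℂ) (B k p q) * B k r s)
      = (if p = r ∧ q = s then 2 else 0)
        - ((2/(N:ℝ) : ℝ) : ℂ) * (starRingEnd ℂ) (g p q) * g r s := by
  set sq : ℝ := Real.sqrt (2/(N:ℝ)) with hsq
  set c : ℂ := (sq : ℂ) * Complex.I with hc
  have hsN : ((sq : ℂ))^2 = ((2/(N:ℝ) : ℝ) : ℂ) := by
    have : sq^2 = 2/(N:ℝ) := Real.sq_sqrt (by positivity)
    exact_mod_cast congrArg (fun x : ℝ => (x : ℂ)) this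
  have e1 : (∑ k, ((B k p q).re : ℂ) * B k r s)
      = (if p = r ∧ q = s then 1 else 0) - g r q * g p s
        - ((c * g p q).re : ℂ) * (c * g r s) := by
    have h := congrArg (fun M : Matrix (Fin N) (Fin N) ℂ => M r s)
      (hcomp (Matrix.single p q 1))
    simp only [Matrix.sum_apply, Matrix.smul_apply, Matrix.sub_apply, ip_E,
      std_conjT, g_std_g, std_apply, smul_eq_mul] at h
    calc (∑ k, ((B k p q).re : ℂ) * B k r s)
        = ∑ k, (2:ℂ) * ((1/2 * (B k p q).re) • B k r s) := by
          refine Finset.sum_congr rfl fun k _ => ?_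
          rw [Complex.real_smul]; push_cast; ring
      _ = (2:ℂ) * ∑ k, ((1/2 * (B k p q).re) • B k r s) := by rw [Finset.mul_sum]
      _ = _ := by
          rw [h]
          simp only [Complex.real_smul, Matrix.smul_apply, smul_eq_mul]
          push_cast
          ring
  have e2 : (∑ k, ((B k p q).im : ℂ) * B k r s)
      = Complex.I * (if p = r ∧ q = s then 1 else 0) + Complex.I * (g r q * g p s)
        - ((c * g p q).im : ℂ) * (c * g r s) := by
    have h := congrArg (fun M : Matrix (Fin N) (Fin N) ℂ => M r s)
      (hcomp (Complex.I • Matrix.single p q 1))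
    rw [show (Complex.I • Matrix.single p q (1:ℂ))ᴴ
        = (-Complex.I) • Matrix.single q p 1 by
      rw [Matrix.conjTranspose_smul, std_conjT]; simp] at h
    simp only [Matrix.sum_apply, Matrix.smul_apply, Matrix.sub_apply, ip_iE,
      Matrix.mul_smul, Matrix.smul_mul, g_std_g, std_apply, smul_eq_mul] at h
    calc (∑ k, ((B k p q).im : ℂ) * B k r s)
        = ∑ k, (2:ℂ) * ((1/2 * (B k p q).im) • B k r s) := by
          refine Finset.sum_congr rfl fun k _ => ?_
          rw [Complex.real_smul]; push_cast; ring
      _ = (2:ℂ) * ∑ k, ((1/2 * (B k p q).im) • B k r s) := by rw [Finset.mul_sum]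
      _ = _ := by
          rw [h]
          simp only [Complex.real_smul, Matrix.smul_apply, smul_eq_mul]
          push_cast
          ring
  calc (∑ k, (starRingEnd ℂ) (B k p q) * B k r s)
      = ∑ k, (((B k p q).re : ℂ) * B k r s
          - Complex.I * (((B k p q).im : ℂ) * B k r s)) := by
        refine Finset.sum_congr rfl fun k _ => ?_
        rw [conj_formula]; ring
    _ = (∑ k, ((B k p q).re : ℂ) * B k r s)
        - Complex.I * ∑ k, ((B k p q).im : ℂ) * B k r s := by
        rw [Finset.sum_sub_distrib, Finset.mul_sum]
    _ = _ := by
        have hcr : ((c * g p q).re : ℂ) = -(sq:ℂ) * ((g p q).im : ℂ) := by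
          rw [hc]; simp [Complex.mul_re]
        have hci : ((c * g p q).im : ℂ) = (sq:ℂ) * ((g p q).re : ℂ) := by
          rw [hc]; simp [Complex.mul_im]
        rw [e1, e2, conj_formula (g p q), hcr, hci,
          show (if p = r ∧ q = s then (2:ℂ) else 0)
            = 2 * (if p = r ∧ q = s then (1:ℂ) else 0) by split <;> ring,
          hc]
        linear_combination (-(if p = r ∧ q = s then (1:ℂ) else 0) - g r q * g p s
            + ((sq:ℂ))^2 * ((g p q).re:ℂ) * g r s) * Complex.I_sq
          + ((((g p q).im:ℂ) * Complex.I - ((g p q).re:ℂ)) * g r s) * hsN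

end SU5Aux



open SU5Aux

/-- For g ∈ SU(N) and any orthonormal basis {B_k} of T_g SU(N) w.r.t.
⟨A,B⟩ = (1/2) Re Tr(Aᴴ B), ∑_k ⟨B_k, X B_k Y⟩
= Re(Tr X Tr Y) - (1/N) Re Tr(g⁻¹ X g Y). -/
theorem stmt_5 {N : ℕ} (g : Matrix (Fin N) (Fin N) ℂ)
    (hg : gᴴ * g = 1) (hdet : g.det = 1)
    {ι : Type*} [Fintype ι] [DecidableEq ι] (B : ι → Matrix (Fin N) (Fin N) ℂ)
    (htang : ∀ k, gᴴ * B k + (B k)ᴴ * g = 0 ∧ Matrix.trace (g⁻¹ * B k) = 0)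
    (horth : ∀ k l, (1/2 : ℝ) * (Matrix.trace ((B k)ᴴ * B l)).re
      = if k = l then 1 else 0)
    (hspan : ∀ M : Matrix (Fin N) (Fin N) ℂ,
      gᴴ * M + Mᴴ * g = 0 → Matrix.trace (g⁻¹ * M) = 0 →
      M ∈ Submodule.span ℝ (Set.range B))
    (X Y : Matrix (Fin N) (Fin N) ℂ) :
    ∑ k, (1/2 : ℝ) * (Matrix.trace ((B k)ᴴ * (X * B k * Y))).re
      = (Matrix.trace X * Matrix.trace Y).re
        - (1 / (N : ℝ)) * (Matrix.trace (g⁻¹ * X * g * Y)).re := by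
  rcases Nat.eq_zero_or_pos N with hN | hN
  · subst hN
    have htr : ∀ M : Matrix (Fin 0) (Fin 0) ℂ, Matrix.trace M = 0 := by
      intro M; rw [Matrix.trace]; simp
    simp [htr]
  -- main case
  have hinv : g⁻¹ = gᴴ := Matrix.inv_eq_left_inv hg
  have hgg : g * gᴴ = 1 := mul_eq_one_comm.mp hg
  have htang' : ∀ k, gᴴ * B k + (B k)ᴴ * g = 0 ∧ Matrix.trace (gᴴ * B k) = 0 := by
    intro k
    refine ⟨(htang k).1, ?_⟩
    have := (htang k).2
    rwa [hinv] at this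
  have horth' : ∀ k l, ip (B k) (B l) = if k = l then 1 else 0 := horth
  have hspan' : ∀ M : Matrix (Fin N) (Fin N) ℂ,
      gᴴ * M + Mᴴ * g = 0 → Matrix.trace (gᴴ * M) = 0 →
      M ∈ Submodule.span ℝ (Set.range B) := by
    intro M h1 h2
    exact hspan M h1 (by rwa [hinv])
  have hcomp := completeness hN g hg hgg B htang' horth' hspan'
  have htensor := tensor g B hcomp
  -- key complex identity
  have key : (∑ k, Matrix.trace ((B k)ᴴ * (X * B k * Y)))
      = 2 * (Matrix.trace X * Matrix.trace Y)
        - ((2/(N:ℝ) : ℝ) : ℂ) * Matrix.trace (gᴴ * X * g * Y) := by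
    have expand : ∀ M : Matrix (Fin N) (Fin N) ℂ,
        Matrix.trace (Mᴴ * (X * M * Y))
          = ∑ p, ∑ q, ∑ r, ∑ s, X p r * Y s q * ((starRingEnd ℂ) (M p q) * M r s) := by
      intro M
      rw [trace_form]
      refine Finset.sum_congr rfl fun p _ => Finset.sum_congr rfl fun q _ => ?_
      have hxy : (X * M * Y) p q = ∑ r, ∑ s, X p r * M r s * Y s q := by
        simp only [Matrix.mul_apply, Finset.sum_mul]
        rw [Finset.sum_comm]
      rw [hxy, Finset.mul_sum]
      refine Finset.sum_congr rfl fun r _ => ?_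
      rw [Finset.mul_sum]
      refine Finset.sum_congr rfl fun s _ => ?_
      ring
    simp only [expand]
    rw [Finset.sum_comm]
    have swap : (∑ p, ∑ k, ∑ q, ∑ r, ∑ s,
        X p r * Y s q * ((starRingEnd ℂ) (B k p q) * B k r s))
        = ∑ p, ∑ q, ∑ r, ∑ s,
          X p r * Y s q * ((if p = r ∧ q = s then (2:ℂ) else 0)
            - ((2/(N:ℝ) : ℝ) : ℂ) * (starRingEnd ℂ) (g p q) * g r s) := by
      refine Finset.sum_congr rfl fun p _ => ?_
      rw [Finset.sum_comm]
      refine Finset.sum_congr rfl fun q _ => ?_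
      rw [Finset.sum_comm]
      refine Finset.sum_congr rfl fun r _ => ?_
      rw [Finset.sum_comm]
      refine Finset.sum_congr rfl fun s _ => ?_
      rw [← Finset.mul_sum, htensor]
    rw [swap]
    have split : (∑ p, ∑ q, ∑ r, ∑ s,
        X p r * Y s q * ((if p = r ∧ q = s then (2:ℂ) else 0)
          - ((2/(N:ℝ) : ℝ) : ℂ) * (starRingEnd ℂ) (g p q) * g r s))
        = (∑ p, ∑ q, ∑ r, ∑ s, X p r * Y s q * (if p = r ∧ q = s then (2:ℂ) else 0))
          - (∑ p, ∑ q, ∑ r, ∑ s, X p r * Y s q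
              * (((2/(N:ℝ) : ℝ) : ℂ) * (starRingEnd ℂ) (g p q) * g r s)) := by
      simp only [mul_sub, Finset.sum_sub_distrib]
    rw [split]
    have first : (∑ p, ∑ q, ∑ r, ∑ s,
        X p r * Y s q * (if p = r ∧ q = s then (2:ℂ) else 0))
        = 2 * (Matrix.trace X * Matrix.trace Y) := by
      rw [Matrix.trace, Matrix.trace, Finset.sum_mul_sum]
      simp only [Matrix.diag_apply, Finset.mul_sum]
      refine Finset.sum_congr rfl fun p _ => Finset.sum_congr rfl fun q _ => ?_
      simp only [mul_ite, mul_zero, ite_and]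
      simp [Finset.sum_ite_eq]
      ring
    have second : (∑ p, ∑ q, ∑ r, ∑ s, X p r * Y s q
          * (((2/(N:ℝ) : ℝ) : ℂ) * (starRingEnd ℂ) (g p q) * g r s))
        = ((2/(N:ℝ) : ℝ) : ℂ) * Matrix.trace (gᴴ * X * g * Y) := by
      rw [show gᴴ * X * g * Y = gᴴ * (X * g * Y) by noncomm_ring, trace_form, Finset.mul_sum]
      refine Finset.sum_congr rfl fun p _ => ?_
      rw [Finset.mul_sum]
      refine Finset.sum_congr rfl fun q _ => ?_
      have hxy : (X * g * Y) p q = ∑ r, ∑ s, X p r * g r s * Y s q := by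
        simp only [Matrix.mul_apply, Finset.sum_mul]
        rw [Finset.sum_comm]
      rw [hxy, Finset.mul_sum, Finset.mul_sum]
      refine Finset.sum_congr rfl fun r _ => ?_
      rw [Finset.mul_sum, Finset.mul_sum]
      refine Finset.sum_congr rfl fun s _ => ?_
      ring
    rw [first, second]
  have lhs_eq : (∑ k, (1/2 : ℝ) * (Matrix.trace ((B k)ᴴ * (X * B k * Y))).re)
      = (1/2 : ℝ) * (∑ k, Matrix.trace ((B k)ᴴ * (X * B k * Y))).re := by
    rw [Complex.re_sum, Finset.mul_sum]
  rw [lhs_eq, key, hinv]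
  have ht2 : ((((2/(N:ℝ) : ℝ) : ℂ)) * Matrix.trace (gᴴ * X * g * Y)).re
      = (2/(N:ℝ)) * (Matrix.trace (gᴴ * X * g * Y)).re := by
    simp [Complex.mul_re]
  rw [Complex.sub_re, ht2]
  have h2re : ((2 : ℂ) * (Matrix.trace X * Matrix.trace Y)).re
      = 2 * (Matrix.trace X * Matrix.trace Y).re := by
    simp [Complex.mul_re]
  rw [h2re]
  ring
end

section
/- Let g be an N×N complex unitary matrix and P, Q arbitrary N×N complex matrices. Using the real inner product ⟨A,B⟩ = (1/2) Re Tr(A† B), the sum of ⟨B_k, P B_k Q⟩ over the orthonormal family B_{ij}^- = g(e_i e_j^T - e_j e_i^T) (i<j), B_{ij}^+ = i g(e_i e_j^T + e_j e_i^T) (i<j), and B_i = √2 · i g e_i e_i^T (1 ≤ i ≤ N), equals Re(Tr(P) Tr(Q)). -/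
open Matrix

lemma ct_std {N : ℕ} (i j : Fin N) : (Matrix.single i j (1:ℂ))ᴴ = Matrix.single j i 1 := by
  ext a b
  simp [Matrix.single, conjTranspose_apply, and_comm]

lemma htr {N : ℕ} (M Q : Matrix (Fin N) (Fin N) ℂ) (a b c d : Fin N) :
    Matrix.trace (Matrix.single b a (1:ℂ) * M * Matrix.single c d 1 * Q) = M a c * Q d b := by
  simp [Matrix.trace, Matrix.diag, Matrix.mul_apply, Matrix.single, ite_and,
    Finset.mul_sum, Finset.sum_mul]

lemma keyA {N : ℕ} (g P Q : Matrix (Fin N) (Fin N) ℂ) (a b c d : Fin N) :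
    Matrix.trace ((g * Matrix.single a b (1:ℂ))ᴴ * (P * (g * Matrix.single c d 1) * Q))
      = (gᴴ * P * g) a c * Q d b := by
  rw [conjTranspose_mul, ct_std]
  have h := htr (gᴴ * P * g) Q a b c d
  rw [← h]
  congr 1
  simp [mul_assoc]

lemma pair1 {N : ℕ} (g P Q : Matrix (Fin N) (Fin N) ℂ) (i j : Fin N) :
    Matrix.trace ((g * (Matrix.single i j (1:ℂ) - Matrix.single j i 1))ᴴ
        * (P * (g * (Matrix.single i j (1:ℂ) - Matrix.single j i 1)) * Q))
      = (gᴴ*P*g) i i * Q j j - (gᴴ*P*g) i j * Q i j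
        - (gᴴ*P*g) j i * Q j i + (gᴴ*P*g) j j * Q i i := by
  simp only [mul_sub, conjTranspose_sub, sub_mul, mul_sub, trace_sub, keyA]
  ring

lemma pair2 {N : ℕ} (g P Q : Matrix (Fin N) (Fin N) ℂ) (i j : Fin N) :
    Matrix.trace ((Complex.I • (g * (Matrix.single i j (1:ℂ) + Matrix.single j i 1)))ᴴ
        * (P * (Complex.I • (g * (Matrix.single i j (1:ℂ) + Matrix.single j i 1))) * Q))
      = (gᴴ*P*g) i i * Q j j + (gᴴ*P*g) i j * Q i j
        + (gᴴ*P*g) j i * Q j i + (gᴴ*P*g) j j * Q i i := by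
  rw [conjTranspose_smul]
  simp only [smul_mul_assoc, mul_smul_comm, trace_smul, smul_smul]
  have hI : Complex.I * (starRingEnd ℂ) Complex.I = 1 := by
    simp [Complex.conj_I, Complex.I_mul_I]
  rw [Complex.star_def, hI, one_smul]
  simp only [mul_add, conjTranspose_add, add_mul, trace_add, keyA]
  ring

lemma pair3 {N : ℕ} (g P Q : Matrix (Fin N) (Fin N) ℂ) (i : Fin N) :
    Matrix.trace ((((Real.sqrt 2 : ℂ) * Complex.I) • (g * Matrix.single i i (1:ℂ)))ᴴ
        * (P * (((Real.sqrt 2 : ℂ) * Complex.I) • (g * Matrix.single i i (1:ℂ))) * Q))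
      = 2 * ((gᴴ*P*g) i i * Q i i) := by
  rw [conjTranspose_smul]
  simp only [smul_mul_assoc, mul_smul_comm, trace_smul, smul_smul, keyA]
  rw [smul_eq_mul]
  congr 1
  have h2 : ((Real.sqrt 2 : ℝ) : ℂ) * ((Real.sqrt 2 : ℝ) : ℂ) = 2 := by
    rw [← Complex.ofReal_mul, Real.mul_self_sqrt (by norm_num)]
    norm_num
  rw [Complex.star_def, _root_.map_mul, Complex.conj_ofReal, Complex.conj_I]
  linear_combination (-(Complex.I * Complex.I)) * h2 - 2 * Complex.I_mul_I

lemma sum_split {N : ℕ} (M Q : Matrix (Fin N) (Fin N) ℂ) :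
    (∑ p : Fin N × Fin N, (M p.1 p.1 * Q p.2 p.2).re)
    = (∑ p ∈ Finset.univ.filter (fun p : Fin N × Fin N => p.1 < p.2), (M p.1 p.1 * Q p.2 p.2).re)
    + (∑ p ∈ Finset.univ.filter (fun p : Fin N × Fin N => p.1 < p.2), (M p.2 p.2 * Q p.1 p.1).re)
    + (∑ i : Fin N, (M i i * Q i i).re) := by
  classical
  set f : Fin N × Fin N → ℝ := fun p => (M p.1 p.1 * Q p.2 p.2).re with hf
  rw [← Finset.sum_filter_add_sum_filter_not Finset.univ (fun p : Fin N × Fin N => p.1 < p.2) f]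
  rw [← Finset.sum_filter_add_sum_filter_not
    (Finset.univ.filter (fun p : Fin N × Fin N => ¬ p.1 < p.2)) (fun p => p.2 < p.1) f]
  rw [Finset.filter_filter, Finset.filter_filter]
  have e1 : Finset.univ.filter (fun p : Fin N × Fin N => ¬ p.1 < p.2 ∧ p.2 < p.1)
      = Finset.univ.filter (fun p : Fin N × Fin N => p.2 < p.1) := by
    apply Finset.filter_congr; intro p _; constructor
    · exact fun h => h.2
    · exact fun h => ⟨fun h' => absurd (h.trans h') (lt_irrefl _), h⟩
  have e2 : Finset.univ.filter (fun p : Fin N × Fin N => ¬ p.1 < p.2 ∧ ¬ p.2 < p.1)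
      = Finset.univ.filter (fun p : Fin N × Fin N => p.1 = p.2) := by
    apply Finset.filter_congr; intro p _; constructor
    · exact fun h => le_antisymm (not_lt.mp h.2) (not_lt.mp h.1)
    · exact fun h => ⟨by simp [h], by simp [h]⟩
  rw [e1, e2]
  have e3 : ∑ p ∈ Finset.univ.filter (fun p : Fin N × Fin N => p.2 < p.1), f p
      = ∑ p ∈ Finset.univ.filter (fun p : Fin N × Fin N => p.1 < p.2),
          (M p.2 p.2 * Q p.1 p.1).re := by
    refine Finset.sum_nbij' (fun p => Prod.swap p) (fun p => Prod.swap p) ?_ ?_ ?_ ?_ ?_ <;>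
      simp [hf]
  have e4 : ∑ p ∈ Finset.univ.filter (fun p : Fin N × Fin N => p.1 = p.2), f p
      = ∑ i : Fin N, (M i i * Q i i).re := by
    refine Finset.sum_nbij' (fun p => p.1) (fun i => (i, i)) ?_ ?_ ?_ ?_ ?_ <;>
      simp (config := {contextual := true}) [hf, Prod.ext_iff]
  rw [e3, e4]
  ring

/-- For unitary g and complex matrices P, Q, summing ⟨B, P B Q⟩ (with
⟨A,B⟩ = (1/2)Re Tr(AᴴB)) over the orthonormal basis g(e_ie_jᵀ - e_je_iᵀ) (i<j),
i·g(e_ie_jᵀ + e_je_iᵀ) (i<j), √2·i·g e_ie_iᵀ gives Re(Tr P · Tr Q). -/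
theorem stmt_12 {N : ℕ} (g : Matrix (Fin N) (Fin N) ℂ) (hg : gᴴ * g = 1)
    (P Q : Matrix (Fin N) (Fin N) ℂ) :
    (∑ p ∈ Finset.univ.filter (fun p : Fin N × Fin N => p.1 < p.2),
        (1/2 : ℝ) * (Matrix.trace
          ((g * (Matrix.single p.1 p.2 (1:ℂ) - Matrix.single p.2 p.1 1))ᴴ
            * (P * (g * (Matrix.single p.1 p.2 (1:ℂ) - Matrix.single p.2 p.1 1)) * Q))).re)
    + (∑ p ∈ Finset.univ.filter (fun p : Fin N × Fin N => p.1 < p.2),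
        (1/2 : ℝ) * (Matrix.trace
          ((Complex.I • (g * (Matrix.single p.1 p.2 (1:ℂ) + Matrix.single p.2 p.1 1)))ᴴ
            * (P * (Complex.I • (g * (Matrix.single p.1 p.2 (1:ℂ)
                + Matrix.single p.2 p.1 1))) * Q))).re)
    + (∑ i : Fin N,
        (1/2 : ℝ) * (Matrix.trace
          ((((Real.sqrt 2 : ℂ) * Complex.I) • (g * Matrix.single i i (1:ℂ)))ᴴ
            * (P * (((Real.sqrt 2 : ℂ) * Complex.I) • (g * Matrix.single i i (1:ℂ))) * Q))).re)
      = (Matrix.trace P * Matrix.trace Q).re := by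
  classical
  have hgg : g * gᴴ = 1 := mul_eq_one_comm.mp hg
  have htrM : Matrix.trace (gᴴ * P * g) = Matrix.trace P := by
    rw [trace_mul_cycle, hgg, one_mul]

  simp only [pair1, pair2, pair3]
  set M := gᴴ * P * g with hM
  have hre : ∀ A B C D : ℂ,
      (1/2 : ℝ) * ((A - B - C + D).re) + (1/2 : ℝ) * ((A + B + C + D).re) = A.re + D.re := by
    intro A B C D
    simp only [Complex.add_re, Complex.sub_re]
    ring
  have hsum1 : ∀ p ∈ Finset.univ.filter (fun p : Fin N × Fin N => p.1 < p.2),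
      ((1/2 : ℝ) * (M p.1 p.1 * Q p.2 p.2 - M p.1 p.2 * Q p.1 p.2
          - M p.2 p.1 * Q p.2 p.1 + M p.2 p.2 * Q p.1 p.1).re
        + (1/2 : ℝ) * (M p.1 p.1 * Q p.2 p.2 + M p.1 p.2 * Q p.1 p.2
          + M p.2 p.1 * Q p.2 p.1 + M p.2 p.2 * Q p.1 p.1).re)
      = (M p.1 p.1 * Q p.2 p.2).re + (M p.2 p.2 * Q p.1 p.1).re := by
    intro p _; exact hre _ _ _ _
  have hsum3 : ∀ i ∈ (Finset.univ : Finset (Fin N)),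
      (1/2 : ℝ) * (2 * (M i i * Q i i)).re = (M i i * Q i i).re := by
    intro i _
    have : (2 * (M i i * Q i i)).re = 2 * (M i i * Q i i).re := by
      simp [Complex.mul_re]
    rw [this]; ring
  rw [← Finset.sum_add_distrib, Finset.sum_congr rfl hsum1, Finset.sum_congr rfl hsum3,
    Finset.sum_add_distrib]
  have hRHS : (Matrix.trace P * Matrix.trace Q).re
      = ∑ p : Fin N × Fin N, (M p.1 p.1 * Q p.2 p.2).re := by
    rw [← htrM]
    have : Matrix.trace M * Matrix.trace Q = ∑ p : Fin N × Fin N, M p.1 p.1 * Q p.2 p.2 := by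
      rw [Matrix.trace, Matrix.trace, Finset.sum_mul_sum, ← Finset.sum_product']
      simp [Matrix.diag, Finset.univ_product_univ]
    rw [this, Complex.re_sum]
  rw [hRHS, sum_split M Q]
end

section
/- Let f : M_N(ℝ) → ℝ be a C² function and define the vector fields X_{ij} f (q) = Σ_a (q_{ai} ∂f/∂q_{aj} - q_{aj} ∂f/∂q_{ai}) for i < j. Then for q ∈ SO(N), Σ_{i<j} X_{ij}(X_{ij} f)(q) = -(N-1) Σ_{a,j} q_{aj} ∂f/∂q_{aj} + Σ_{a,j} ∂²f/∂q_{aj}² - Σ_{a,b,i,j} q_{bj} q_{ai} ∂²f/∂q_{bi}∂q_{aj}. -/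
/-- The vector field X_{ij} f(q) = ∑_a (q_{ai} ∂f/∂q_{aj} - q_{aj} ∂f/∂q_{ai}) on
M_N(ℝ) ≅ ℝ^{N×N} (Euclidean coordinates q(a,i)). -/
noncomputable def Xop {N : ℕ} (i j : Fin N)
    (f : EuclideanSpace ℝ (Fin N × Fin N) → ℝ)
    (q : EuclideanSpace ℝ (Fin N × Fin N)) : ℝ :=
  ∑ a : Fin N,
    (q (a, i) * fderiv ℝ f q (EuclideanSpace.single (a, j) 1)
      - q (a, j) * fderiv ℝ f q (EuclideanSpace.single (a, i) 1))

set_option maxRecDepth 4000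

open Finset

variable {N : ℕ}

lemma sum4_pair (F : Fin N → Fin N → Fin N → Fin N → ℝ) :
    ∑ a, ∑ b, ∑ i, ∑ j, F a b i j
      = ∑ x : (Fin N × Fin N) × (Fin N × Fin N), F x.1.1 x.1.2 x.2.1 x.2.2 := by
  simp [Fintype.sum_prod_type]

lemma sum4_swap (F : Fin N → Fin N → Fin N → Fin N → ℝ) :
    ∑ i, ∑ j, ∑ b, ∑ a, F i j b a = ∑ b, ∑ a, ∑ i, ∑ j, F i j b a := by
  rw [sum4_pair, sum4_pair]
  exact (Equiv.sum_comp (Equiv.prodComm (Fin N × Fin N) (Fin N × Fin N))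
    (fun x : (Fin N × Fin N) × (Fin N × Fin N) => F x.1.1 x.1.2 x.2.1 x.2.2)).symm

/-- the permutation ((a,b),(i,j)) ↦ ((j,i),(b,a)) -/
def e4 : ((Fin N × Fin N) × (Fin N × Fin N)) ≃ ((Fin N × Fin N) × (Fin N × Fin N)) where
  toFun x := ((x.2.2, x.2.1), (x.1.2, x.1.1))
  invFun x := ((x.2.2, x.2.1), (x.1.2, x.1.1))
  left_inv := fun ⟨⟨a, b⟩, ⟨i, j⟩⟩ => rfl
  right_inv := fun ⟨⟨a, b⟩, ⟨i, j⟩⟩ => rfl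

/-- auxiliary: D-coefficient -/
noncomputable def Dc (c g : Fin N → Fin N → ℝ) (K : Fin N → Fin N → Fin N → Fin N → ℝ)
    (i j b cc : Fin N) : ℝ :=
  (if cc = i then g b j else 0) - (if cc = j then g b i else 0)
    + ∑ a, (c a i * K b cc a j - c a j * K b cc a i)

lemma main_alg (c g : Fin N → Fin N → ℝ) (K : Fin N → Fin N → Fin N → Fin N → ℝ)
    (hK : ∀ b cc a d, K b cc a d = K a d b cc)
    (hrow : ∀ a b : Fin N, ∑ i, c a i * c b i = if a = b then (1:ℝ) else 0) :
    ∑ p ∈ Finset.univ.filter (fun p : Fin N × Fin N => p.1 < p.2),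
        (∑ b, (c b p.1 * Dc c g K p.1 p.2 b p.2 - c b p.2 * Dc c g K p.1 p.2 b p.1))
      = -((N : ℝ) - 1) * (∑ a, ∑ j, c a j * g a j)
        + (∑ a, ∑ j, K a j a j)
        - (∑ a, ∑ b, ∑ i, ∑ j, c b j * c a i * K a j b i) := by
  -- U i j
  set U : Fin N → Fin N → ℝ := fun i j => ∑ b, c b i * Dc c g K i j b j with hU
  -- antisymmetry of D
  have hD : ∀ i j b cc, Dc c g K j i b cc = - Dc c g K i j b cc := by
    intro i j b cc
    have : ∑ a, (c a j * K b cc a i - c a i * K b cc a j)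
        = - ∑ a, (c a i * K b cc a j - c a j * K b cc a i) := by
      rw [← Finset.sum_neg_distrib]
      exact Finset.sum_congr rfl fun a _ => by ring
    simp only [Dc]; rw [this]; ring
  -- T = U i j + U j i
  have hT : ∀ i j : Fin N,
      (∑ b, (c b i * Dc c g K i j b j - c b j * Dc c g K i j b i)) = U i j + U j i := by
    intro i j
    rw [hU]
    simp only
    rw [← Finset.sum_add_distrib]
    refine Finset.sum_congr rfl fun b _ => ?_
    rw [hD i j b i]
    ring
  -- diagonal vanishes
  have hUdiag : ∀ i, U i i = 0 := by
    intro i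
    rw [hU]
    refine Finset.sum_eq_zero fun b _ => ?_
    simp [Dc]
  -- step: sum over filter < of T = full double sum of U
  have step1 : ∑ p ∈ Finset.univ.filter (fun p : Fin N × Fin N => p.1 < p.2),
      (∑ b, (c b p.1 * Dc c g K p.1 p.2 b p.2 - c b p.2 * Dc c g K p.1 p.2 b p.1))
      = ∑ i, ∑ j, U i j := by
    have e1 : ∑ p ∈ Finset.univ.filter (fun p : Fin N × Fin N => p.1 < p.2), U p.2 p.1
        = ∑ p ∈ Finset.univ.filter (fun p : Fin N × Fin N => p.2 < p.1), U p.1 p.2 := by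
      refine Finset.sum_nbij' Prod.swap Prod.swap (fun p hp => ?_) (fun p hp => ?_)
        (fun p hp => Prod.swap_swap p) (fun p hp => Prod.swap_swap p) (fun p hp => rfl)
      · simp only [Finset.mem_filter, Finset.mem_univ, true_and] at hp ⊢; exact hp
      · simp only [Finset.mem_filter, Finset.mem_univ, true_and] at hp ⊢; exact hp
    have e2 : Finset.univ.filter (fun p : Fin N × Fin N => p.1 < p.2) ∪
        Finset.univ.filter (fun p : Fin N × Fin N => p.2 < p.1)
        = Finset.univ.filter (fun p : Fin N × Fin N => p.1 ≠ p.2) := by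
      ext p
      simp only [Finset.mem_union, Finset.mem_filter, Finset.mem_univ, true_and]
      constructor
      · rintro (h | h)
        · exact ne_of_lt h
        · exact (ne_of_lt h).symm
      · exact fun h => h.lt_or_gt
    have e3 : Disjoint (Finset.univ.filter (fun p : Fin N × Fin N => p.1 < p.2))
        (Finset.univ.filter (fun p : Fin N × Fin N => p.2 < p.1)) := by
      rw [Finset.disjoint_left]
      intro p hp hp'
      simp only [Finset.mem_filter] at hp hp'
      exact lt_asymm hp.2 hp'.2
    calc ∑ p ∈ Finset.univ.filter (fun p : Fin N × Fin N => p.1 < p.2),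
          (∑ b, (c b p.1 * Dc c g K p.1 p.2 b p.2 - c b p.2 * Dc c g K p.1 p.2 b p.1))
        = ∑ p ∈ Finset.univ.filter (fun p : Fin N × Fin N => p.1 < p.2),
            (U p.1 p.2 + U p.2 p.1) := Finset.sum_congr rfl fun p _ => hT p.1 p.2
      _ = ∑ p ∈ Finset.univ.filter (fun p : Fin N × Fin N => p.1 < p.2), U p.1 p.2
          + ∑ p ∈ Finset.univ.filter (fun p : Fin N × Fin N => p.2 < p.1), U p.1 p.2 := by
            rw [Finset.sum_add_distrib, e1]
      _ = ∑ p ∈ Finset.univ.filter (fun p : Fin N × Fin N => p.1 ≠ p.2), U p.1 p.2 := by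
            rw [← e2, Finset.sum_union e3]
      _ = ∑ p : Fin N × Fin N, U p.1 p.2 := by
            rw [Finset.sum_filter]
            refine Finset.sum_congr rfl fun p _ => ?_
            by_cases h : p.1 = p.2
            · simp [h, hUdiag]
            · simp [h]
      _ = ∑ i, ∑ j, U i j := by rw [Fintype.sum_prod_type]
  rw [step1]
  have hUexp : ∀ i j, U i j =
      (∑ b, c b i * (if j = i then g b j else 0))
      - (∑ b, c b i * g b i)
      + ((∑ b, ∑ a, c b i * (c a i * K b j a j)) - (∑ b, ∑ a, c b i * (c a j * K b j a i))) := by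
    intro i j
    rw [hU]
    simp only
    rw [Finset.sum_congr rfl (fun b _ => show c b i * Dc c g K i j b j
        = c b i * (if j = i then g b j else 0) - c b i * g b i
          + ((∑ a, c b i * (c a i * K b j a j)) - (∑ a, c b i * (c a j * K b j a i))) by
      simp only [Dc, if_pos rfl]
      rw [Finset.sum_sub_distrib, mul_add, mul_sub, mul_sub, Finset.mul_sum, Finset.mul_sum]
      simp)]
    rw [Finset.sum_add_distrib, Finset.sum_sub_distrib, Finset.sum_sub_distrib]
  simp only [hUexp]
  simp only [Finset.sum_add_distrib, Finset.sum_sub_distrib]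
  have A1 : ∑ i, ∑ j, ∑ b, c b i * (if j = i then g b j else 0) = ∑ a, ∑ j, c a j * g a j := by
    have h1 : ∀ i : Fin N, ∑ j, ∑ b, c b i * (if j = i then g b j else 0)
        = ∑ b, c b i * g b i := by
      intro i
      rw [Finset.sum_comm]
      refine Finset.sum_congr rfl fun b _ => ?_
      rw [← Finset.mul_sum, Finset.sum_ite_eq' Finset.univ i (fun j => g b j),
        if_pos (Finset.mem_univ i)]
    rw [Finset.sum_congr rfl fun i _ => h1 i, Finset.sum_comm]
  have A2 : ∑ i : Fin N, ∑ _j : Fin N, ∑ b, c b i * g b i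
      = (N : ℝ) * ∑ a, ∑ j, c a j * g a j := by
    have h1 : ∀ i : Fin N, ∑ _j : Fin N, ∑ b, c b i * g b i
        = (N : ℝ) * ∑ b, c b i * g b i := by
      intro i
      rw [Finset.sum_const, Finset.card_univ, Fintype.card_fin, nsmul_eq_mul]
    rw [Finset.sum_congr rfl fun i _ => h1 i, ← Finset.mul_sum, Finset.sum_comm]
  have A3 : ∑ i, ∑ j, ∑ b, ∑ a, c b i * (c a i * K b j a j) = ∑ a, ∑ j, K a j a j := by
    rw [show (∑ i, ∑ j, ∑ b, ∑ a, c b i * (c a i * K b j a j))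
        = ∑ b, ∑ a, ∑ i, ∑ j, c b i * (c a i * K b j a j) from sum4_swap _]
    have h1 : ∀ b a : Fin N, ∑ i, ∑ j, c b i * (c a i * K b j a j)
        = ∑ j, (if b = a then (1:ℝ) else 0) * K b j a j := by
      intro b a
      rw [Finset.sum_comm]
      refine Finset.sum_congr rfl fun j _ => ?_
      rw [show (∑ i, c b i * (c a i * K b j a j)) = (∑ i, c b i * c a i) * K b j a j by
        rw [Finset.sum_mul]; exact Finset.sum_congr rfl fun i _ => (mul_assoc _ _ _).symm]
      rw [hrow]
    rw [Finset.sum_congr rfl fun b _ => Finset.sum_congr rfl fun a _ => h1 b a]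
    refine Finset.sum_congr rfl fun b _ => ?_
    rw [Finset.sum_comm]
    refine Finset.sum_congr rfl fun j _ => ?_
    rw [Finset.sum_congr rfl fun a _ => show (if b = a then (1:ℝ) else 0) * K b j a j
        = (if b = a then K b j a j else 0) by split <;> simp]
    rw [Finset.sum_ite_eq Finset.univ b (fun a => K b j a j), if_pos (Finset.mem_univ b)]
  have A4 : ∑ i, ∑ j, ∑ b, ∑ a, c b i * (c a j * K b j a i)
      = ∑ a, ∑ b, ∑ i, ∑ j, c b j * c a i * K a j b i := by
    rw [sum4_pair, sum4_pair]
    have := Equiv.sum_comp (e4 (N := N))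
      (fun x : (Fin N × Fin N) × (Fin N × Fin N) =>
        c x.2.1 x.1.1 * (c x.2.2 x.1.2 * K x.2.1 x.1.2 x.2.2 x.1.1))
    rw [← this]
    refine Finset.sum_congr rfl fun x _ => ?_
    simp only [e4, Equiv.coe_fn_mk]
    rw [hK x.1.2 x.2.1 x.1.1 x.2.2]
    ring
  rw [A1, A2, A3, A4]
  ring

section Analytic
variable {N : ℕ}

lemma Ksymm (f : EuclideanSpace ℝ (Fin N × Fin N) → ℝ) (hf : ContDiff ℝ 2 f)
    (q v w : EuclideanSpace ℝ (Fin N × Fin N)) :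
    fderiv ℝ (fderiv ℝ f) q v w = fderiv ℝ (fderiv ℝ f) q w v := by
  have hf' : ContDiff ℝ 1 (fderiv ℝ f) := hf.fderiv_right (by norm_num)
  exact second_derivative_symmetric
    (fun y => (hf.differentiable (by norm_num) y).hasFDerivAt)
    ((hf'.differentiable (by norm_num) q).hasFDerivAt) v w

lemma coord_fderiv (p : Fin N × Fin N) (q v : EuclideanSpace ℝ (Fin N × Fin N)) :
    fderiv ℝ (fun r : EuclideanSpace ℝ (Fin N × Fin N) => r p) q v = v p := by
  have : (fun r : EuclideanSpace ℝ (Fin N × Fin N) => r p) = EuclideanSpace.proj p := rfl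
  rw [this, ContinuousLinearMap.fderiv]
  rfl

lemma fderiv_inner (f : EuclideanSpace ℝ (Fin N × Fin N) → ℝ) (hf : ContDiff ℝ 2 f)
    (q v : EuclideanSpace ℝ (Fin N × Fin N)) (p : Fin N × Fin N) :
    fderiv ℝ (fun r => fderiv ℝ f r (EuclideanSpace.single p 1)) q v
      = fderiv ℝ (fderiv ℝ f) q v (EuclideanSpace.single p 1) := by
  have hf' : ContDiff ℝ 1 (fderiv ℝ f) := hf.fderiv_right (by norm_num)
  rw [fderiv_clm_apply ((hf'.differentiable (by norm_num)) q) (differentiableAt_const _)]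
  simp

lemma fderiv_Xop (f : EuclideanSpace ℝ (Fin N × Fin N) → ℝ) (hf : ContDiff ℝ 2 f)
    (i j : Fin N) (q v : EuclideanSpace ℝ (Fin N × Fin N)) :
    fderiv ℝ (Xop i j f) q v
      = ∑ a : Fin N,
        ((v (a, i) * fderiv ℝ f q (EuclideanSpace.single (a, j) 1)
            - v (a, j) * fderiv ℝ f q (EuclideanSpace.single (a, i) 1))
          + (q (a, i) * fderiv ℝ (fderiv ℝ f) q v (EuclideanSpace.single (a, j) 1)
            - q (a, j) * fderiv ℝ (fderiv ℝ f) q v (EuclideanSpace.single (a, i) 1))) := by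
  have hf' : ContDiff ℝ 1 (fderiv ℝ f) := hf.fderiv_right (by norm_num)
  have hG : ∀ p : Fin N × Fin N,
      Differentiable ℝ (fun r => fderiv ℝ f r (EuclideanSpace.single p 1)) :=
    fun p => (hf'.clm_apply contDiff_const).differentiable (by norm_num)
  have hGf : ∀ (p : Fin N × Fin N),
      fderiv ℝ (fun r => fderiv ℝ f r (EuclideanSpace.single p 1)) q v
        = fderiv ℝ (fderiv ℝ f) q v (EuclideanSpace.single p 1) :=
    fun p => fderiv_inner f hf q v p
  have hproj : ∀ p : Fin N × Fin N,
      Differentiable ℝ (fun r : EuclideanSpace ℝ (Fin N × Fin N) => r p) :=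
    fun p => by have := (EuclideanSpace.proj (𝕜 := ℝ) (ι := Fin N × Fin N) p).differentiable; exact this
  have hXop : Xop i j f = fun r => ∑ a : Fin N,
      (r (a, i) * fderiv ℝ f r (EuclideanSpace.single (a, j) 1)
        - r (a, j) * fderiv ℝ f r (EuclideanSpace.single (a, i) 1)) := rfl
  rw [hXop, fderiv_fun_sum (fun a _ =>
      (((hproj (a, i)) q).fun_mul ((hG (a, j)) q)).fun_sub (((hproj (a, j)) q).fun_mul ((hG (a, i)) q)))]
  rw [ContinuousLinearMap.sum_apply]
  refine Finset.sum_congr rfl fun a _ => ?_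
  rw [fderiv_fun_sub (((hproj (a, i)) q).fun_mul ((hG (a, j)) q)) (((hproj (a, j)) q).fun_mul ((hG (a, i)) q))]
  rw [ContinuousLinearMap.sub_apply,
    fderiv_fun_mul ((hproj (a, i)) q) ((hG (a, j)) q),
    fderiv_fun_mul ((hproj (a, j)) q) ((hG (a, i)) q)]
  simp only [ContinuousLinearMap.add_apply, ContinuousLinearMap.smul_apply,
    smul_eq_mul, hGf, coord_fderiv]
  ring

lemma single_coord (b cc a i : Fin N) :
    (EuclideanSpace.single ((b, cc) : Fin N × Fin N) (1:ℝ)) (a, i)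
      = if a = b ∧ i = cc then 1 else 0 := by
  rw [EuclideanSpace.single_apply]
  simp only [Prod.mk.injEq]

lemma sum_single_mul (b cc i' : Fin N) (gg : Fin N → ℝ) :
    ∑ a, (if a = b ∧ i' = cc then (1:ℝ) else 0) * gg a = if cc = i' then gg b else 0 := by
  by_cases h : cc = i'
  · subst h
    rw [if_pos rfl]
    rw [Finset.sum_congr rfl fun a _ => show (if a = b ∧ cc = cc then (1:ℝ) else 0) * gg a
        = if a = b then gg a else 0 by by_cases hab : a = b <;> simp [hab]]
    rw [Finset.sum_ite_eq' Finset.univ b gg, if_pos (Finset.mem_univ b)]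
  · rw [if_neg h]
    refine Finset.sum_eq_zero fun a _ => ?_
    rw [if_neg (fun hc => h hc.2.symm), zero_mul]

lemma Dmatch (f : EuclideanSpace ℝ (Fin N × Fin N) → ℝ) (hf : ContDiff ℝ 2 f)
    (q : EuclideanSpace ℝ (Fin N × Fin N)) (i j b cc : Fin N) :
    fderiv ℝ (Xop i j f) q (EuclideanSpace.single (b, cc) 1)
      = Dc (fun a i => q (a, i))
          (fun a d => fderiv ℝ f q (EuclideanSpace.single (a, d) 1))
          (fun b cc a d => fderiv ℝ (fderiv ℝ f) q (EuclideanSpace.single (b, cc) 1)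
            (EuclideanSpace.single (a, d) 1)) i j b cc := by
  rw [fderiv_Xop f hf i j q _]
  simp only [Dc, single_coord]
  rw [Finset.sum_add_distrib, Finset.sum_sub_distrib,
    sum_single_mul b cc i (fun a => fderiv ℝ f q (EuclideanSpace.single (a, j) 1)),
    sum_single_mul b cc j (fun a => fderiv ℝ f q (EuclideanSpace.single (a, i) 1))]

end Analytic

/-- At q ∈ SO(N), ∑_{i<j} X_{ij}(X_{ij} f)(q) = -(N-1) ∑ q_{aj} ∂f/∂q_{aj}
+ ∑ ∂²f/∂q_{aj}² - ∑ q_{bj} q_{ai} ∂²f/∂q_{bi}∂q_{aj}. -/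
theorem stmt_14 {N : ℕ}
    (f : EuclideanSpace ℝ (Fin N × Fin N) → ℝ) (hf : ContDiff ℝ 2 f)
    (q : EuclideanSpace ℝ (Fin N × Fin N))
    (hq : ∀ i j : Fin N, ∑ a : Fin N, q (a, i) * q (a, j) = if i = j then 1 else 0)
    (hqdet : (Matrix.of fun a i : Fin N => q (a, i)).det = 1) :
    ∑ p ∈ Finset.univ.filter (fun p : Fin N × Fin N => p.1 < p.2),
        Xop p.1 p.2 (Xop p.1 p.2 f) q
      = -((N : ℝ) - 1) * (∑ a : Fin N, ∑ j : Fin N,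
            q (a, j) * fderiv ℝ f q (EuclideanSpace.single (a, j) 1))
        + (∑ a : Fin N, ∑ j : Fin N,
            fderiv ℝ (fun r => fderiv ℝ f r (EuclideanSpace.single (a, j) 1)) q
              (EuclideanSpace.single (a, j) 1))
        - (∑ a : Fin N, ∑ b : Fin N, ∑ i : Fin N, ∑ j : Fin N,
            q (b, j) * q (a, i) *
              fderiv ℝ (fun r => fderiv ℝ f r (EuclideanSpace.single (b, i) 1)) q
                (EuclideanSpace.single (a, j) 1)) := by
  classical
  -- row orthogonality
  set M : Matrix (Fin N) (Fin N) ℝ := Matrix.of (fun a i => q (a, i)) with hMdef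
  have hM : M.transpose * M = 1 := by
    ext i j
    rw [Matrix.mul_apply]
    simp only [hMdef, Matrix.transpose_apply, Matrix.of_apply]
    rw [hq i j, Matrix.one_apply]
  have hM' : M * M.transpose = 1 := mul_eq_one_comm.mp hM
  have hrow : ∀ a b : Fin N, ∑ i, q (a, i) * q (b, i) = if a = b then (1:ℝ) else 0 := by
    intro a b
    have h1 : (M * M.transpose) a b = (1 : Matrix (Fin N) (Fin N) ℝ) a b := by rw [hM']
    rw [Matrix.mul_apply] at h1
    simp only [hMdef, Matrix.transpose_apply, Matrix.of_apply] at h1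
    rw [h1, Matrix.one_apply]
  have key := main_alg (fun a i => q (a, i))
    (fun a d => fderiv ℝ f q (EuclideanSpace.single (a, d) 1))
    (fun b cc a d => fderiv ℝ (fderiv ℝ f) q (EuclideanSpace.single (b, cc) 1)
      (EuclideanSpace.single (a, d) 1))
    (fun b cc a d => Ksymm f hf q _ _) hrow
  calc ∑ p ∈ Finset.univ.filter (fun p : Fin N × Fin N => p.1 < p.2),
        Xop p.1 p.2 (Xop p.1 p.2 f) q
      = ∑ p ∈ Finset.univ.filter (fun p : Fin N × Fin N => p.1 < p.2),
          (∑ b, (q (b, p.1) * Dc (fun a i => q (a, i))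
            (fun a d => fderiv ℝ f q (EuclideanSpace.single (a, d) 1))
            (fun b cc a d => fderiv ℝ (fderiv ℝ f) q (EuclideanSpace.single (b, cc) 1)
              (EuclideanSpace.single (a, d) 1)) p.1 p.2 b p.2
          - q (b, p.2) * Dc (fun a i => q (a, i))
            (fun a d => fderiv ℝ f q (EuclideanSpace.single (a, d) 1))
            (fun b cc a d => fderiv ℝ (fderiv ℝ f) q (EuclideanSpace.single (b, cc) 1)
              (EuclideanSpace.single (a, d) 1)) p.1 p.2 b p.1)) := by
        refine Finset.sum_congr rfl fun p _ => ?_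
        show ∑ b : Fin N, (q (b, p.1) * fderiv ℝ (Xop p.1 p.2 f) q
            (EuclideanSpace.single (b, p.2) 1)
          - q (b, p.2) * fderiv ℝ (Xop p.1 p.2 f) q (EuclideanSpace.single (b, p.1) 1)) = _
        refine Finset.sum_congr rfl fun b _ => ?_
        rw [Dmatch f hf q p.1 p.2 b p.2, Dmatch f hf q p.1 p.2 b p.1]
    _ = _ := by
        rw [key]
        congr 1
        · congr 1
          refine Finset.sum_congr rfl fun a _ => Finset.sum_congr rfl fun j _ => ?_
          rw [fderiv_inner f hf q _ _]
        · refine Finset.sum_congr rfl fun a _ => Finset.sum_congr rfl fun b _ =>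
            Finset.sum_congr rfl fun i _ => Finset.sum_congr rfl fun j _ => ?_
          rw [fderiv_inner f hf q _ _]
end

section
/- Let g be an N×N real orthogonal matrix and A an arbitrary N×N real matrix. Then the orthogonal projection P_g(X) = (1/2)X - (1/2) g X^T g satisfies Tr over the full matrix space of the map X ↦ P_g(X A g + g A X), with respect to orthonormal coordinates for ⟨A,B⟩ = (1/2)Tr(A^T B), equal to (N-1) Tr(A g): that is, Σ_{i<j} ⟨g(e_ie_j^T - e_je_i^T), g(e_ie_j^T - e_je_i^T) A g + g A g(e_ie_j^T - e_je_i^T)⟩ = (N-1) Tr(A g). -/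
open Matrix

private lemma transpose_sbm {N : ℕ} (i j : Fin N) :
    (Matrix.single i j (1:ℝ))ᵀ = Matrix.single j i 1 := by
  ext a b
  simp [Matrix.single, transpose_apply, and_comm]

private lemma trace_sbm_mul {N : ℕ} (i j : Fin N) (B : Matrix (Fin N) (Fin N) ℝ) :
    Matrix.trace (Matrix.single i j (1:ℝ) * B) = B j i := by
  classical
  rw [Matrix.trace]
  rw [Finset.sum_eq_single i]
  · simp [Matrix.diag]
  · intro k _ hk
    simp [Matrix.diag, Matrix.single_mul_apply_of_ne (h := hk)]
  · simp

private lemma pair_sum {N : ℕ} (f : Fin N → ℝ) :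
    ∑ p ∈ Finset.univ.filter (fun p : Fin N × Fin N => p.1 < p.2), (f p.1 + f p.2)
      = ((N : ℝ) - 1) * ∑ i, f i := by
  classical
  have hswap : ∑ p ∈ Finset.univ.filter (fun p : Fin N × Fin N => p.2 < p.1), (f p.1 + f p.2)
      = ∑ p ∈ Finset.univ.filter (fun p : Fin N × Fin N => p.1 < p.2), (f p.1 + f p.2) := by
    apply Finset.sum_nbij' (fun p => Prod.swap p) (fun p => Prod.swap p) <;>
      simp [add_comm]
  have hdiag : ∑ p ∈ Finset.univ.filter (fun p : Fin N × Fin N => ¬ p.1 < p.2 ∧ ¬ p.2 < p.1),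
      (f p.1 + f p.2) = 2 * ∑ i, f i := by
    have : Finset.univ.filter (fun p : Fin N × Fin N => ¬ p.1 < p.2 ∧ ¬ p.2 < p.1)
        = Finset.univ.image (fun i : Fin N => (i, i)) := by
      ext p
      constructor
      · intro hp
        simp only [Finset.mem_filter, Finset.mem_univ, true_and] at hp
        obtain ⟨h1, h2⟩ := hp
        have hpe : p.1 = p.2 := le_antisymm (not_lt.1 h2) (not_lt.1 h1)
        exact Finset.mem_image.2 ⟨p.1, Finset.mem_univ _, Prod.ext rfl hpe⟩
      · intro hp
        obtain ⟨i, -, rfl⟩ := Finset.mem_image.1 hp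
        simp
    rw [this, Finset.sum_image (fun a _ b _ h => congrArg Prod.fst h)]
    rw [two_mul, ← Finset.sum_add_distrib]
  have htot : ∑ p : Fin N × Fin N, (f p.1 + f p.2) = 2 * (N : ℝ) * ∑ i, f i := by
    rw [Fintype.sum_prod_type]
    have h : ∀ i : Fin N, ∑ j : Fin N, (f i + f j) = (N : ℝ) * f i + ∑ j, f j := by
      intro i
      rw [Finset.sum_add_distrib]
      simp [Finset.card_univ, mul_comm]
    simp only [h]
    rw [Finset.sum_add_distrib, ← Finset.mul_sum]
    simp [Finset.card_univ]
    ring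
  have hsplit : ∑ p : Fin N × Fin N, (f p.1 + f p.2)
      = (∑ p ∈ Finset.univ.filter (fun p : Fin N × Fin N => p.1 < p.2), (f p.1 + f p.2))
        + ((∑ p ∈ Finset.univ.filter (fun p : Fin N × Fin N => p.2 < p.1), (f p.1 + f p.2))
        + ∑ p ∈ Finset.univ.filter (fun p : Fin N × Fin N => ¬ p.1 < p.2 ∧ ¬ p.2 < p.1),
            (f p.1 + f p.2)) := by
    rw [← Finset.sum_filter_add_sum_filter_not Finset.univ (fun p : Fin N × Fin N => p.1 < p.2)]
    congr 1
    rw [← Finset.sum_filter_add_sum_filter_not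
      (Finset.univ.filter (fun p : Fin N × Fin N => ¬ p.1 < p.2))
      (fun p : Fin N × Fin N => p.2 < p.1)]
    congr 1
    · congr 1
      rw [Finset.filter_filter]
      ext p
      simp only [Finset.mem_filter, Finset.mem_univ, true_and, Fin.lt_def, not_lt, Fin.le_def]
      omega
    · rw [Finset.filter_filter]
  rw [htot, hswap, hdiag] at hsplit
  linarith

/-- For g ∈ O(N) and A ∈ M_N(ℝ),
∑_{i<j} ⟨g(e_ie_jᵀ - e_je_iᵀ), g(e_ie_jᵀ - e_je_iᵀ) A g + g A g(e_ie_jᵀ - e_je_iᵀ)⟩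
= (N-1) Tr(A g). -/
theorem stmt_16 {N : ℕ} (g : Matrix (Fin N) (Fin N) ℝ) (hg : gᵀ * g = 1)
    (A : Matrix (Fin N) (Fin N) ℝ) :
    ∑ p ∈ Finset.univ.filter (fun p : Fin N × Fin N => p.1 < p.2),
        (1/2 : ℝ) * Matrix.trace
          ((g * (Matrix.single p.1 p.2 (1:ℝ) - Matrix.single p.2 p.1 1))ᵀ
            * ((g * (Matrix.single p.1 p.2 (1:ℝ) - Matrix.single p.2 p.1 1)) * A * g
              + g * A * (g * (Matrix.single p.1 p.2 (1:ℝ) - Matrix.single p.2 p.1 1))))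
      = ((N : ℝ) - 1) * Matrix.trace (A * g) := by
  classical
  set B := A * g with hB
  have key : ∀ p ∈ Finset.univ.filter (fun p : Fin N × Fin N => p.1 < p.2),
      (1/2 : ℝ) * Matrix.trace
          ((g * (Matrix.single p.1 p.2 (1:ℝ) - Matrix.single p.2 p.1 1))ᵀ
            * ((g * (Matrix.single p.1 p.2 (1:ℝ) - Matrix.single p.2 p.1 1)) * A * g
              + g * A * (g * (Matrix.single p.1 p.2 (1:ℝ) - Matrix.single p.2 p.1 1))))
        = B p.1 p.1 + B p.2 p.2 := by
    rintro ⟨i, j⟩ hp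
    dsimp only
    have hij : i ≠ j := by
      simp only [Finset.mem_filter] at hp
      exact ne_of_lt hp.2
    set E : Matrix (Fin N) (Fin N) ℝ := Matrix.single i j 1 - Matrix.single j i 1 with hE
    have h1 : (g * E)ᵀ * ((g * E) * A * g) = Eᵀ * (E * B) := by
      rw [transpose_mul]
      calc Eᵀ * gᵀ * (g * E * A * g) = Eᵀ * (gᵀ * g) * (E * (A * g)) := by
            noncomm_ring
        _ = Eᵀ * (E * B) := by rw [hg, mul_one, hB]
    have h2 : (g * E)ᵀ * (g * A * (g * E)) = Eᵀ * (B * E) := by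
      rw [transpose_mul]
      calc Eᵀ * gᵀ * (g * A * (g * E)) = Eᵀ * (gᵀ * g) * (A * g * E) := by
            noncomm_ring
        _ = Eᵀ * (B * E) := by rw [hg, mul_one, hB]
    have hEt : Eᵀ = Matrix.single j i 1 - Matrix.single i j 1 := by
      rw [hE, transpose_sub, transpose_sbm, transpose_sbm]
    have hEE : Eᵀ * E = Matrix.single j j 1 + Matrix.single i i 1 := by
      rw [hEt, hE]
      rw [sub_mul, mul_sub, mul_sub]
      rw [single_mul_single_same, single_mul_single_of_ne (h := hij),
        single_mul_single_of_ne (h := hij.symm), single_mul_single_same]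
      simp
    have hEE' : E * Eᵀ = Matrix.single i i 1 + Matrix.single j j 1 := by
      rw [hEt, hE]
      rw [sub_mul, mul_sub, mul_sub]
      rw [single_mul_single_same, single_mul_single_of_ne (h := hij.symm),
        single_mul_single_of_ne (h := hij), single_mul_single_same]
      simp
    rw [mul_add, trace_add, h1, h2]
    rw [← mul_assoc Eᵀ E B, hEE]
    have h3 : Matrix.trace (Eᵀ * (B * E)) = Matrix.trace (E * Eᵀ * B) := by
      rw [← mul_assoc, Matrix.trace_mul_cycle]
    rw [h3, hEE']
    simp only [add_mul, trace_add, trace_sbm_mul]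
    ring
  rw [Finset.sum_congr rfl key, pair_sum (fun i => B i i)]
  rfl
end

section
/- Let g be an N×N complex unitary matrix and A an arbitrary N×N complex matrix. Then Σ_k ⟨B_k, B_k A g + g A B_k⟩ = 2N Re Tr(A g) - (2η/N) Re Tr(A g), where {B_k} is an orthonormal basis of T_g SU(N) (if η = 1) or T_g U(N) (if η = 0) with respect to ⟨X,Y⟩ = (1/2) Re Tr(X† Y). -/
open Matrix

namespace Stmt17

variable {N : ℕ}

noncomputable def ip (X Y : Matrix (Fin N) (Fin N) ℂ) : ℝ := (1/2 : ℝ) * (Matrix.trace (Xᴴ * Y)).re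

noncomputable def ipL (X : Matrix (Fin N) (Fin N) ℂ) : Matrix (Fin N) (Fin N) ℂ →ₗ[ℝ] ℝ where
  toFun Y := ip X Y
  map_add' Y Z := by simp [ip, Matrix.mul_add]; ring
  map_smul' r Y := by simp [ip, Matrix.mul_smul, Complex.real_smul, Complex.mul_re]; ring

noncomputable def P (g : Matrix (Fin N) (Fin N) ℂ) (η : ℝ) (M : Matrix (Fin N) (Fin N) ℂ) :
    Matrix (Fin N) (Fin N) ℂ :=
  (1/2 : ℝ) • (M - g * Mᴴ * g) - (η * (Matrix.trace (gᴴ * M)).im / N) • (Complex.I • g)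

lemma ip_symm (X Y : Matrix (Fin N) (Fin N) ℂ) : ip X Y = ip Y X := by
  unfold ip
  have : trace (Yᴴ * X) = star (trace (Xᴴ * Y)) := by
    rw [← Matrix.trace_conjTranspose, Matrix.conjTranspose_mul, Matrix.conjTranspose_conjTranspose]
  rw [this]; simp

lemma ip_sub (X Y Z : Matrix (Fin N) (Fin N) ℂ) : ip X (Y - Z) = ip X Y - ip X Z := by
  simp [ip, Matrix.mul_sub]; ring

lemma ip_smul (X : Matrix (Fin N) (Fin N) ℂ) (r : ℝ) (Z : Matrix (Fin N) (Fin N) ℂ) :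
    ip X (r • Z) = r * ip X Z := by
  simp [ip, Matrix.mul_smul, Complex.real_smul, Complex.mul_re]; ring

lemma ip_Ig (g X : Matrix (Fin N) (Fin N) ℂ) :
    ip X (Complex.I • g) = (Matrix.trace (gᴴ * X)).im / 2 := by
  unfold ip
  rw [Matrix.mul_smul, Matrix.trace_smul]
  have : Matrix.trace (Xᴴ * g) = star (Matrix.trace (gᴴ * X)) := by
    rw [← Matrix.trace_conjTranspose, Matrix.conjTranspose_mul, Matrix.conjTranspose_conjTranspose]
  rw [this]
  simp [Complex.star_def, smul_eq_mul, Complex.mul_re]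
  ring

lemma ip_P (g : Matrix (Fin N) (Fin N) ℂ) (η : ℝ) (X Y : Matrix (Fin N) (Fin N) ℂ) :
    ip X (P g η Y) = (1/2 : ℝ) * (ip X Y - ip X (g * Yᴴ * g))
      - (η * (Matrix.trace (gᴴ * Y)).im / N) * ((Matrix.trace (gᴴ * X)).im / 2) := by
  rw [P, ip_sub, ip_smul, ip_smul, ip_sub, ip_Ig]

lemma ip_key1 (g X Y : Matrix (Fin N) (Fin N) ℂ) : ip X (g * Yᴴ * g) = ip Y (g * Xᴴ * g) := by
  unfold ip
  have h1 : Xᴴ * (g * Yᴴ * g) = (Xᴴ * g) * (Yᴴ * g) := by rw [Matrix.mul_assoc, Matrix.mul_assoc]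
  rw [h1, Matrix.trace_mul_comm]
  have h2 : Yᴴ * g * (Xᴴ * g) = Yᴴ * (g * Xᴴ * g) := by rw [Matrix.mul_assoc, Matrix.mul_assoc]
  rw [h2]

lemma P_selfadj (g : Matrix (Fin N) (Fin N) ℂ) (η : ℝ) (X Y : Matrix (Fin N) (Fin N) ℂ) :
    ip X (P g η Y) = ip Y (P g η X) := by
  rw [ip_P, ip_P, ip_key1, ip_symm X Y]
  ring

lemma P_fix (g : Matrix (Fin N) (Fin N) ℂ) (hg : gᴴ * g = 1) (η : ℝ)
    (M : Matrix (Fin N) (Fin N) ℂ) (h1 : gᴴ * M + Mᴴ * g = 0)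
    (h2 : η * (Matrix.trace (gᴴ * M)).im = 0) : P g η M = M := by
  have hgg : g * gᴴ = 1 := mul_eq_one_comm.mp hg
  have hM : g * Mᴴ * g = -M := by
    have h3 : Mᴴ * g = -(gᴴ * M) := by linear_combination (norm := module) h1
    rw [Matrix.mul_assoc, h3, Matrix.mul_neg, ← Matrix.mul_assoc, hgg, Matrix.one_mul]
  have hco : η * (Matrix.trace (gᴴ * M)).im / N = 0 := by rw [h2]; simp
  rw [P, hM, hco]
  module

lemma P_ct (g : Matrix (Fin N) (Fin N) ℂ) (η : ℝ) (M : Matrix (Fin N) (Fin N) ℂ) :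
    (P g η M)ᴴ = (1/2 : ℝ) • (Mᴴ - gᴴ * M * gᴴ)
      + (η * (Matrix.trace (gᴴ * M)).im / N) • (Complex.I • gᴴ) := by
  rw [P]
  simp [Matrix.conjTranspose_smul, Matrix.conjTranspose_sub, Matrix.conjTranspose_mul,
    Matrix.mul_assoc, Complex.star_def, Complex.conj_I, smul_smul]

lemma P_mulleft (g : Matrix (Fin N) (Fin N) ℂ) (hg : gᴴ * g = 1) (η : ℝ)
    (M : Matrix (Fin N) (Fin N) ℂ) :
    gᴴ * P g η M = (1/2 : ℝ) • (gᴴ * M - Mᴴ * g)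
      - (η * (Matrix.trace (gᴴ * M)).im / N) • (Complex.I • (1 : Matrix (Fin N) (Fin N) ℂ)) := by
  rw [P]
  rw [Matrix.mul_sub, Matrix.mul_smul, Matrix.mul_smul, Matrix.mul_smul]
  rw [Matrix.mul_sub, hg]
  rw [show gᴴ * (g * Mᴴ * g) = Mᴴ * g by
    rw [← Matrix.mul_assoc, ← Matrix.mul_assoc, hg, Matrix.one_mul]]

lemma P_tang1 (g : Matrix (Fin N) (Fin N) ℂ) (hg : gᴴ * g = 1) (η : ℝ)
    (M : Matrix (Fin N) (Fin N) ℂ) : gᴴ * P g η M + (P g η M)ᴴ * g = 0 := by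
  have e2 : (P g η M)ᴴ * g = (1/2 : ℝ) • (Mᴴ * g - gᴴ * M)
      + (η * (Matrix.trace (gᴴ * M)).im / N) • (Complex.I • (1 : Matrix (Fin N) (Fin N) ℂ)) := by
    rw [P_ct]
    rw [Matrix.add_mul, Matrix.smul_mul, Matrix.smul_mul, Matrix.smul_mul]
    rw [Matrix.sub_mul, hg]
    rw [show gᴴ * M * gᴴ * g = gᴴ * M by rw [Matrix.mul_assoc, hg, Matrix.mul_one]]
  rw [P_mulleft g hg, e2]
  module

lemma P_tang2 (g : Matrix (Fin N) (Fin N) ℂ) (hg : gᴴ * g = 1) (hN : (N : ℝ) ≠ 0)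
    (M : Matrix (Fin N) (Fin N) ℂ) : Matrix.trace (gᴴ * (P g 1 M)) = 0 := by
  rw [P_mulleft g hg]
  rw [Matrix.trace_sub, Matrix.trace_smul, Matrix.trace_smul, Matrix.trace_smul,
    Matrix.trace_sub, Matrix.trace_one]
  have h : Matrix.trace (Mᴴ * g) = star (Matrix.trace (gᴴ * M)) := by
    rw [← Matrix.trace_conjTranspose, Matrix.conjTranspose_mul, Matrix.conjTranspose_conjTranspose]
  rw [h]
  set z := Matrix.trace (gᴴ * M)
  rw [Complex.real_smul, Complex.real_smul]
  push_cast
  simp only [Complex.star_def, smul_eq_mul, Fintype.card_fin]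
  rw [Complex.sub_conj]
  have hNc : ((N : ℂ)) ≠ 0 := by simpa using hN
  field_simp
  push_cast
  ring

theorem complete {ι : Type*} [Fintype ι] [DecidableEq ι]
    (g : Matrix (Fin N) (Fin N) ℂ) (hg : gᴴ * g = 1) (η : ℝ) (hη : η = 0 ∨ η = 1)
    (hN : (N : ℝ) ≠ 0)
    (B : ι → Matrix (Fin N) (Fin N) ℂ)
    (htang : ∀ k, gᴴ * B k + (B k)ᴴ * g = 0
      ∧ (η = 1 → Matrix.trace (g⁻¹ * B k) = 0))
    (horth : ∀ k l, (1/2 : ℝ) * (Matrix.trace ((B k)ᴴ * B l)).re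
      = if k = l then 1 else 0)
    (hspan : ∀ M : Matrix (Fin N) (Fin N) ℂ,
      gᴴ * M + Mᴴ * g = 0 → (η = 1 → Matrix.trace (g⁻¹ * M) = 0) →
      M ∈ Submodule.span ℝ (Set.range B))
    (M : Matrix (Fin N) (Fin N) ℂ) :
    ∑ k, ip (B k) M • B k = P g η M := by
  have hinv : g⁻¹ = gᴴ := Matrix.inv_eq_left_inv hg
  have hBfix : ∀ k, P g η (B k) = B k := by
    intro k
    refine P_fix g hg η _ (htang k).1 ?_
    rcases hη with h | h
    · rw [h]; ring
    · rw [h, ((htang k).2 h ▸ by rw [hinv] : Matrix.trace (gᴴ * B k) = 0)]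
      simp
  have hPmem : P g η M ∈ Submodule.span ℝ (Set.range B) := by
    refine hspan _ (P_tang1 g hg η M) ?_
    intro h
    rw [hinv, h]
    exact P_tang2 g hg hN M
  obtain ⟨c, hc⟩ := (Submodule.mem_span_range_iff_exists_fun ℝ).mp hPmem
  have hcl : ∀ l, c l = ip (B l) M := by
    intro l
    have h1 : ip (B l) (P g η M) = c l := by
      rw [← hc]
      have e : ip (B l) (∑ k, c k • B k) = ∑ k, c k * ip (B l) (B k) := by
        rw [show ip (B l) (∑ k, c k • B k) = ipL (B l) (∑ k, c k • B k) from rfl, map_sum]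
        simp only [_root_.map_smul, smul_eq_mul]
        rfl
      rw [e]
      have e2 : ∀ k, ip (B l) (B k) = if l = k then 1 else 0 := fun k => horth l k
      simp [e2]
    have h2 : ip (B l) (P g η M) = ip (B l) M := by
      rw [P_selfadj, hBfix l, ip_symm]
    rw [← h1, h2]
  rw [← hc]
  congr 1
  ext k
  rw [hcl k]

lemma trace_ct_mul_std (X : Matrix (Fin N) (Fin N) ℂ) (a b : Fin N) (z : ℂ) :
    Matrix.trace (Xᴴ * Matrix.single a b z) = star (X a b) * z := by
  simp [Matrix.trace, Matrix.diag, Matrix.mul_apply, Matrix.single, ite_and,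
    Finset.sum_ite_eq, Finset.sum_ite_eq']

lemma mul_std_mul_apply (g : Matrix (Fin N) (Fin N) ℂ) (a b : Fin N) (w : ℂ) (c d : Fin N) :
    (g * Matrix.single b a w * g) c d = g c b * w * g a d := by
  simp [Matrix.mul_apply, Matrix.single, ite_and, Finset.sum_ite_eq, Finset.sum_ite_eq',
    Finset.mul_sum, Finset.sum_mul]

lemma std_ct (a b : Fin N) (z : ℂ) :
    (Matrix.single a b z)ᴴ = Matrix.single b a (star z) := by
  ext c d
  simp [Matrix.conjTranspose_apply, Matrix.single, and_comm]
  by_cases h : a = d <;> by_cases h' : b = c <;> simp [h, h']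

lemma cx (w v : ℂ) : w * v = ((w * 1).re : ℂ) * v - Complex.I * (((w * Complex.I).re : ℂ) * v) := by
  rw [mul_one, show ((w * Complex.I).re : ℝ) = -w.im from by simp [Complex.mul_re]]
  push_cast
  linear_combination (-v) * Complex.re_add_im w

lemma P_std_apply (g : Matrix (Fin N) (Fin N) ℂ) (η : ℝ) (a b : Fin N) (z : ℂ) (c d : Fin N) :
    (P g η (Matrix.single a b z)) c d
      = (1/2 : ℝ) • ((if a = c ∧ b = d then z else 0) - g c b * star z * g a d)
        - (η * (star (g a b) * z).im / N) • (Complex.I * g c d) := by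
  rw [P]
  rw [show Matrix.trace (gᴴ * Matrix.single a b z) = star (g a b) * z from
    trace_ct_mul_std g a b z]
  rw [std_ct]
  simp only [Matrix.sub_apply, Matrix.smul_apply, smul_eq_mul]
  rw [mul_std_mul_apply]
  simp only [Matrix.single, Matrix.of_apply]

theorem star_rel {ι : Type*} [Fintype ι]
    (g : Matrix (Fin N) (Fin N) ℂ) (η : ℝ) (hN : (N : ℝ) ≠ 0)
    (B : ι → Matrix (Fin N) (Fin N) ℂ)
    (hcomp : ∀ M, ∑ k, ip (B k) M • B k = P g η M)
    (a b c d : Fin N) :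
    ∑ k, star (B k a b) * B k c d
      = 2 * (if a = c ∧ b = d then 1 else 0) - 2 * (η : ℂ) / (N : ℂ) * star (g a b) * g c d := by
  have key : ∀ z : ℂ, ∑ k, ((star (B k a b) * z).re : ℂ) * B k c d
      = 2 * (P g η (Matrix.single a b z)) c d := by
    intro z
    have h1 : (∑ k, ip (B k) (Matrix.single a b z) • B k) c d
        = (P g η (Matrix.single a b z)) c d := by rw [hcomp]
    simp only [Matrix.sum_apply] at h1
    have h2 : ∀ k, (ip (B k) (Matrix.single a b z) • B k) c d
        = ((1/2 : ℝ) * (star (B k a b) * z).re) • B k c d := by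
      intro k
      rw [ip, trace_ct_mul_std, Matrix.smul_apply]
    calc ∑ k, ((star (B k a b) * z).re : ℂ) * B k c d
        = (2:ℂ) * ∑ k, ((1/2 : ℝ) * (star (B k a b) * z).re) • B k c d := by
          rw [Finset.mul_sum]
          refine Finset.sum_congr rfl fun k _ => ?_
          rw [Complex.real_smul]
          push_cast
          ring
      _ = 2 * (P g η (Matrix.single a b z)) c d := by
          rw [← h1]
          exact congrArg (fun t => 2 * t) (Finset.sum_congr rfl fun k _ => (h2 k).symm)
  have k1 := key 1
  have kI := key Complex.I
  calc ∑ k, star (B k a b) * B k c d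
      = ∑ k, (((star (B k a b) * 1).re : ℂ) * B k c d
          - Complex.I * (((star (B k a b) * Complex.I).re : ℂ) * B k c d)) := by
        exact Finset.sum_congr rfl fun k _ => cx _ _
    _ = (∑ k, ((star (B k a b) * 1).re : ℂ) * B k c d)
        - Complex.I * ∑ k, ((star (B k a b) * Complex.I).re : ℂ) * B k c d := by
        rw [Finset.sum_sub_distrib, Finset.mul_sum]
    _ = 2 * (P g η (Matrix.single a b 1)) c d
        - Complex.I * (2 * (P g η (Matrix.single a b Complex.I)) c d) := by rw [k1, kI]
    _ = 2 * (if a = c ∧ b = d then 1 else 0) - 2 * (η : ℂ) / (N : ℂ) * star (g a b) * g c d := by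
        rw [P_std_apply, P_std_apply]
        have hNc : (N : ℂ) ≠ 0 := by simpa using hN
        have e1 : (star (g a b) * 1).im = -(g a b).im := by simp
        have e2 : (star (g a b) * Complex.I).im = (g a b).re := by simp [Complex.mul_im]
        have e3 : star (g a b) = ((g a b).re : ℂ) - ((g a b).im : ℂ) * Complex.I := by
          simp [Complex.ext_iff]
        have e4 : star (1 : ℂ) = 1 := by simp
        have e5 : star Complex.I = -Complex.I := Complex.conj_I
        rw [e1, e2, e3, e4, e5]
        simp only [Complex.real_smul, mul_one]
        push_cast
        by_cases h : a = c ∧ b = d <;> simp only [h, and_self, if_true, if_false] <;>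
          · field_simp
            ring_nf
            simp only [Complex.I_sq]
            ring

end Stmt17

open Stmt17
open Matrix
/-- For unitary g and any orthonormal basis {B_k} of T_g SU(N) (η = 1) or T_g U(N)
(η = 0) w.r.t. ⟨X,Y⟩ = (1/2)Re Tr(XᴴY),
∑_k ⟨B_k, B_k A g + g A B_k⟩ = 2N Re Tr(Ag) - (2η/N) Re Tr(Ag). -/
theorem stmt_17 {N : ℕ} (g : Matrix (Fin N) (Fin N) ℂ)
    (hg : gᴴ * g = 1) (η : ℝ) (hη : η = 0 ∨ η = 1)
    (hdet : η = 1 → g.det = 1)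
    {ι : Type*} [Fintype ι] [DecidableEq ι] (B : ι → Matrix (Fin N) (Fin N) ℂ)
    (htang : ∀ k, gᴴ * B k + (B k)ᴴ * g = 0
      ∧ (η = 1 → Matrix.trace (g⁻¹ * B k) = 0))
    (horth : ∀ k l, (1/2 : ℝ) * (Matrix.trace ((B k)ᴴ * B l)).re
      = if k = l then 1 else 0)
    (hspan : ∀ M : Matrix (Fin N) (Fin N) ℂ,
      gᴴ * M + Mᴴ * g = 0 → (η = 1 → Matrix.trace (g⁻¹ * M) = 0) →
      M ∈ Submodule.span ℝ (Set.range B))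
    (A : Matrix (Fin N) (Fin N) ℂ) :
    ∑ k, (1/2 : ℝ) * (Matrix.trace ((B k)ᴴ * (B k * A * g + g * A * B k))).re
      = 2 * (N : ℝ) * (Matrix.trace (A * g)).re
        - (2 * η / (N : ℝ)) * (Matrix.trace (A * g)).re := by
  by_cases hN : (N : ℝ) = 0
  · have hN0 : N = 0 := by exact_mod_cast hN
    subst hN0
    have hempty : IsEmpty ι := by
      by_contra h
      rw [not_isEmpty_iff] at h
      obtain ⟨k⟩ := h
      have h0 := horth k k
      rw [Matrix.trace_eq_zero_of_isEmpty] at h0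
      simp at h0
    rw [Matrix.trace_eq_zero_of_isEmpty]
    simp
  -- main case
  have hgg : g * gᴴ = 1 := mul_eq_one_comm.mp hg
  have hcomp : ∀ M, ∑ k, ip (B k) M • B k = P g η M :=
    fun M => complete g hg η hη hN B htang horth hspan M
  have hstar := star_rel g η hN B hcomp
  have hNc : (N : ℂ) ≠ 0 := by simpa using hN
  -- S1
  have S1 : ∑ k, (B k)ᴴ * B k
      = (((2*N - 2*η/N : ℝ)) : ℂ) • (1 : Matrix (Fin N) (Fin N) ℂ) := by
    ext i q
    rw [Matrix.sum_apply]
    have e : ∀ k, ((B k)ᴴ * B k) i q = ∑ j, star (B k j i) * B k j q := by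
      intro k; rw [Matrix.mul_apply]; simp [Matrix.conjTranspose_apply]
    rw [Finset.sum_congr rfl fun k _ => e k]
    rw [Finset.sum_comm]
    rw [Finset.sum_congr rfl fun j (_ : j ∈ Finset.univ) => hstar j i j q]
    rw [Finset.sum_sub_distrib]
    have hgE : ∑ j, 2 * (η:ℂ)/(N:ℂ) * star (g j i) * g j q
        = 2 * (η:ℂ)/(N:ℂ) * (1 : Matrix (Fin N) (Fin N) ℂ) i q := by
      rw [← hg, Matrix.mul_apply, Finset.mul_sum]
      simp [Matrix.conjTranspose_apply, mul_assoc]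
    rw [hgE]
    simp only [eq_self_iff_true, true_and, Finset.sum_const, Finset.card_univ,
      Fintype.card_fin, nsmul_eq_mul, Matrix.smul_apply, Matrix.one_apply, smul_eq_mul]
    rcases eq_or_ne i q with hiq | hiq
    · rw [if_pos hiq]
      push_cast
      ring
    · rw [if_neg hiq]
      ring
  have S2 : ∑ k, B k * (B k)ᴴ
      = (((2*N - 2*η/N : ℝ)) : ℂ) • (1 : Matrix (Fin N) (Fin N) ℂ) := by
    ext p q
    rw [Matrix.sum_apply]
    have e : ∀ k, (B k * (B k)ᴴ) p q = ∑ j, star (B k q j) * B k p j := by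
      intro k; rw [Matrix.mul_apply]
      simp [Matrix.conjTranspose_apply, mul_comm]
    rw [Finset.sum_congr rfl fun k _ => e k]
    rw [Finset.sum_comm]
    rw [Finset.sum_congr rfl fun j (_ : j ∈ Finset.univ) => hstar q j p j]
    rw [Finset.sum_sub_distrib]
    have hgE : ∑ j, 2 * (η:ℂ)/(N:ℂ) * star (g q j) * g p j
        = 2 * (η:ℂ)/(N:ℂ) * (1 : Matrix (Fin N) (Fin N) ℂ) p q := by
      rw [← hgg, Matrix.mul_apply, Finset.mul_sum]
      simp [Matrix.conjTranspose_apply]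
      refine Finset.sum_congr rfl fun j _ => ?_
      ring
    rw [hgE]
    simp only [eq_self_iff_true, and_true, Finset.sum_const, Finset.card_univ,
      Fintype.card_fin, nsmul_eq_mul, Matrix.smul_apply, Matrix.one_apply, smul_eq_mul]
    rcases eq_or_ne p q with hpq | hpq
    · rw [if_pos hpq.symm, if_pos hpq]
      push_cast
      ring
    · rw [if_neg (Ne.symm hpq), if_neg hpq]
      ring
  -- trace sums
  have tr1 : ∑ k, Matrix.trace ((B k)ᴴ * (B k * (A * g)))
      = (((2*N - 2*η/N : ℝ)) : ℂ) * Matrix.trace (A * g) := by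
    have e : ∀ k, (B k)ᴴ * (B k * (A * g)) = ((B k)ᴴ * B k) * (A * g) :=
      fun k => (Matrix.mul_assoc _ _ _).symm
    rw [Finset.sum_congr rfl fun k _ => congrArg Matrix.trace (e k)]
    rw [← Matrix.trace_sum, ← Finset.sum_mul, S1, Matrix.smul_mul, Matrix.one_mul,
      Matrix.trace_smul, smul_eq_mul]
  have tr2 : ∑ k, Matrix.trace ((B k)ᴴ * ((g * A) * B k))
      = (((2*N - 2*η/N : ℝ)) : ℂ) * Matrix.trace (A * g) := by
    have e : ∀ k, Matrix.trace ((B k)ᴴ * ((g * A) * B k))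
        = Matrix.trace ((B k * (B k)ᴴ) * (g * A)) := by
      intro k
      rw [← Matrix.mul_assoc, Matrix.trace_mul_comm, ← Matrix.mul_assoc]
    rw [Finset.sum_congr rfl fun k _ => e k]
    rw [← Matrix.trace_sum, ← Finset.sum_mul, S2, Matrix.smul_mul, Matrix.one_mul,
      Matrix.trace_smul, smul_eq_mul, Matrix.trace_mul_comm]
  -- assemble
  have split : ∀ k, Matrix.trace ((B k)ᴴ * (B k * A * g + g * A * B k))
      = Matrix.trace ((B k)ᴴ * (B k * (A * g))) + Matrix.trace ((B k)ᴴ * ((g * A) * B k)) := by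
    intro k
    rw [Matrix.mul_add, Matrix.trace_add, Matrix.mul_assoc (B k) A g]
  calc ∑ k, (1/2 : ℝ) * (Matrix.trace ((B k)ᴴ * (B k * A * g + g * A * B k))).re
      = (1/2 : ℝ) * ((∑ k, Matrix.trace ((B k)ᴴ * (B k * (A * g))))
          + ∑ k, Matrix.trace ((B k)ᴴ * ((g * A) * B k))).re := by
        rw [← Finset.mul_sum, Complex.add_re, Complex.re_sum, Complex.re_sum,
          ← Finset.sum_add_distrib]
        congr 1
        refine Finset.sum_congr rfl fun k _ => ?_
        rw [split k, Complex.add_re]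
    _ = 2 * (N : ℝ) * (Matrix.trace (A * g)).re
        - (2 * η / (N : ℝ)) * (Matrix.trace (A * g)).re := by
        rw [tr1, tr2]
        simp only [Complex.add_re, Complex.mul_re, Complex.ofReal_re, Complex.ofReal_im]
        field_simp
        ring
end
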